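/- arXiv:1806.11436 — 5 statements merged into one kernel-verified Lean document; each statement's English description precedes it below -/
import Mathlib

section
/- Let S, G_0 ∈ M_d(ℂ) be selfadjoint. The real-linear map sending a pair (X, Y) of skew-adjoint d×d complex matrices to [S, X] + [Y, G_0] is surjective onto the real space of selfadjoint d×d matrices with trace zero if and only if every matrix C ∈ M_d(ℂ) that commutes with both S and G_0 is a scalar multiple of the identity. -/
namespace LocalLidskii

open Matrix
open scoped ComplexOrder

/-- The non-increasing rearrangement of a vector `x ∈ ℝⁿ`. -/
noncomputable def sortDesc {n : ℕ} (x : Fin n → ℝ) : Fin n → ℝ :=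
  fun i => x (Tuple.sort x i.rev)

/-- The eigenvalues of a (Hermitian) matrix, counted with multiplicity and
arranged in non-increasing order. -/
noncomputable def eig {d : ℕ} (A : Matrix (Fin d) (Fin d) ℂ) : Fin d → ℝ :=
  if hA : A.IsHermitian then sortDesc hA.eigenvalues else 0

/-- The singular values of a matrix, arranged in non-increasing order. -/
noncomputable def sv {d : ℕ} (A : Matrix (Fin d) (Fin d) ℂ) : Fin d → ℝ :=
  sortDesc (fun i =>
    Real.sqrt ((Matrix.isHermitian_conjTranspose_mul_self A).eigenvalues i))

/-- The rank-one matrix `v ⊗ w : z ↦ ⟨z, w⟩ v`. -/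
noncomputable def rankOne {d : ℕ} (v w : Fin d → ℂ) : Matrix (Fin d) (Fin d) ℂ :=
  Matrix.vecMulVec v (star w)

/-- `v` is an orthonormal basis of `ℂ^d` (a family of `d` orthonormal vectors). -/
def IsONB {d : ℕ} (v : Fin d → (Fin d → ℂ)) : Prop :=
  ∀ i j, (∑ l, star (v i l) * v j l) = if i = j then (1 : ℂ) else 0

/-- `N` is a unitarily invariant norm on `M_d(ℂ)`. -/
structure IsUINorm (d : ℕ) (N : Matrix (Fin d) (Fin d) ℂ → ℝ) : Prop where
  add_le : ∀ A B, N (A + B) ≤ N A + N B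
  smul_eq : ∀ (c : ℂ) (A), N (c • A) = ‖c‖ * N A
  pos_of_ne : ∀ A, A ≠ 0 → 0 < N A
  unitary_invariant : ∀ (A U V : Matrix (Fin d) (Fin d) ℂ),
    U ∈ Matrix.unitaryGroup (Fin d) ℂ → V ∈ Matrix.unitaryGroup (Fin d) ℂ →
    N (U * A * V) = N A

/-- A norm is strictly convex when `N A = N B = N ((A+B)/2)` implies `A = B`. -/
def IsStrictlyConvexNorm (d : ℕ) (N : Matrix (Fin d) (Fin d) ℂ → ℝ) : Prop :=
  ∀ A B, N A = N B → N ((2 : ℂ)⁻¹ • (A + B)) = N A → A = B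

/-- The operator (spectral) norm of a matrix. -/
noncomputable def opNorm {d : ℕ} (A : Matrix (Fin d) (Fin d) ℂ) : ℝ :=
  ‖Matrix.toEuclideanCLM (𝕜 := ℂ) A‖

/-- The unitary orbit `O_μ` of all Hermitian matrices with sorted eigenvalue vector `μ`. -/
def Orbit {d : ℕ} (μ : Fin d → ℝ) : Set (Matrix (Fin d) (Fin d) ℂ) :=
  {G | G.IsHermitian ∧ eig G = μ}

/-- Sum of the `m` largest entries of `x`. -/
noncomputable def pSumDesc {n : ℕ} (x : Fin n → ℝ) (m : ℕ) : ℝ :=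
  ∑ i : Fin n, if (i : ℕ) < m then sortDesc x i else 0

/-- Submajorization `x ≺_w y`. -/
def Submaj {n : ℕ} (x y : Fin n → ℝ) : Prop :=
  ∀ m : ℕ, pSumDesc x m ≤ pSumDesc y m

/-- Majorization `x ≺ y`. -/
def Maj {n : ℕ} (x y : Fin n → ℝ) : Prop :=
  Submaj x y ∧ (∑ i, x i) = ∑ i, y i

/-- The frame operator `S_G = Σ g_i ⊗ g_i` of a finite family of vectors. -/
noncomputable def frameOp {d k : ℕ} (G : Fin k → (Fin d → ℂ)) : Matrix (Fin d) (Fin d) ℂ :=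
  ∑ i, rankOne (G i) (G i)

/-- Membership in `T_d(a)`: the `i`-th vector has squared norm `a i`. -/
def InFrameSet {d k : ℕ} (a : Fin k → ℝ) (G : Fin k → (Fin d → ℂ)) : Prop :=
  ∀ i, (∑ l, Complex.normSq (G i l)) = a i

/-- The Euclidean norm on `ℂ^d`. -/
noncomputable def vnorm {d : ℕ} (x : Fin d → ℂ) : ℝ :=
  Real.sqrt (∑ l, Complex.normSq (x l))

/-- The standard inner product `⟨x, y⟩ = Σ conj(x_l) y_l` on `ℂ^d`. -/
noncomputable def cip {d : ℕ} (x y : Fin d → ℂ) : ℂ := ∑ l, star (x l) * y l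

lemma trace_comm_helper {d : ℕ} (A B Z : Matrix (Fin d) (Fin d) ℂ) :
    (A * (B * Z - Z * B)).trace = ((A * B - B * A) * Z).trace := by
  have h1 : (A * (Z * B)).trace = ((B * A) * Z).trace := by
    rw [← mul_assoc, trace_mul_comm (A * Z) B, ← mul_assoc]
  rw [mul_sub, sub_mul, trace_sub, trace_sub, ← mul_assoc A B Z, h1]

lemma trace_sq_zero {d : ℕ} (X Y : Matrix (Fin d) (Fin d) ℂ)
    (h : (Xᴴ * X).trace + (Yᴴ * Y).trace = 0) : X = 0 ∧ Y = 0 := by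
  have key : ∀ Z : Matrix (Fin d) (Fin d) ℂ,
      (Zᴴ * Z).trace = ((∑ j, ∑ i, Complex.normSq (Z i j) : ℝ) : ℂ) := by
    intro Z
    push_cast
    simp [Matrix.trace, Matrix.mul_apply, Matrix.diag, Matrix.conjTranspose_apply,
      Complex.normSq_eq_conj_mul_self, Complex.star_def]
  rw [key X, key Y] at h
  have h' : (∑ j, ∑ i, Complex.normSq (X i j)) + (∑ j, ∑ i, Complex.normSq (Y i j)) = 0 := by
    exact_mod_cast h
  have hXn : (0:ℝ) ≤ ∑ j, ∑ i, Complex.normSq (X i j) :=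
    Finset.sum_nonneg fun j _ => Finset.sum_nonneg fun i _ => Complex.normSq_nonneg _
  have hYn : (0:ℝ) ≤ ∑ j, ∑ i, Complex.normSq (Y i j) :=
    Finset.sum_nonneg fun j _ => Finset.sum_nonneg fun i _ => Complex.normSq_nonneg _
  have hX0 : (∑ j, ∑ i, Complex.normSq (X i j)) = 0 := by linarith
  have hY0 : (∑ j, ∑ i, Complex.normSq (Y i j)) = 0 := by linarith
  constructor <;> [skip; skip]
  · ext i j
    have := (Finset.sum_eq_zero_iff_of_nonneg (fun j _ =>
      Finset.sum_nonneg fun i _ => Complex.normSq_nonneg _)).mp hX0 j (Finset.mem_univ j)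
    have := (Finset.sum_eq_zero_iff_of_nonneg (fun i _ =>
      Complex.normSq_nonneg (X i j))).mp this i (Finset.mem_univ i)
    simpa [Complex.normSq_eq_zero] using this
  · ext i j
    have := (Finset.sum_eq_zero_iff_of_nonneg (fun j _ =>
      Finset.sum_nonneg fun i _ => Complex.normSq_nonneg _)).mp hY0 j (Finset.mem_univ j)
    have := (Finset.sum_eq_zero_iff_of_nonneg (fun i _ =>
      Complex.normSq_nonneg (Y i j))).mp this i (Finset.mem_univ i)
    simpa [Complex.normSq_eq_zero] using this

lemma fwd {d : ℕ} (S G0 : Matrix (Fin d) (Fin d) ℂ)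
    (hS : S.IsHermitian) (hG0 : G0.IsHermitian) (hd : d ≠ 0)
    (hsurj : ∀ T : Matrix (Fin d) (Fin d) ℂ, T.IsHermitian → T.trace = 0 →
      ∃ X Y : Matrix (Fin d) (Fin d) ℂ, Xᴴ = -X ∧ Yᴴ = -Y ∧
        (S * X - X * S) + (Y * G0 - G0 * Y) = T) :
    ∀ C : Matrix (Fin d) (Fin d) ℂ, C * S = S * C → C * G0 = G0 * C →
      ∃ c : ℂ, C = c • (1 : Matrix (Fin d) (Fin d) ℂ) := by
  have herm : ∀ T : Matrix (Fin d) (Fin d) ℂ, Tᴴ = T → T * S = S * T → T * G0 = G0 * T →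
      ∃ t : ℂ, T = t • (1 : Matrix (Fin d) (Fin d) ℂ) := by
    intro T hT hTS hTG
    set τ : ℂ := T.trace / d with hτ
    have hdC : ((d : ℂ)) ≠ 0 := Nat.cast_ne_zero.mpr hd
    have hτd : τ * d = T.trace := div_mul_cancel₀ _ hdC
    have hτstar : star τ = τ := by
      have h1 : star T.trace = T.trace := by
        calc star T.trace = Tᴴ.trace := (trace_conjTranspose T).symm
          _ = T.trace := by rw [hT]
      rw [hτ, star_div₀, h1, star_natCast]
    set T0 : Matrix (Fin d) (Fin d) ℂ := T - τ • 1 with hT0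
    have hT0h : T0ᴴ = T0 := by
      rw [hT0, conjTranspose_sub, hT, conjTranspose_smul, conjTranspose_one, hτstar]
    have hT0tr : T0.trace = 0 := by
      rw [hT0, trace_sub, trace_smul, trace_one]
      simp [Fintype.card_fin, smul_eq_mul, hτd]
    have hT0S : T0 * S - S * T0 = 0 := by
      rw [hT0, sub_mul, mul_sub, smul_mul_assoc, mul_smul_comm, one_mul, mul_one, hTS]
      abel
    have hT0G : T0 * G0 - G0 * T0 = 0 := by
      rw [hT0, sub_mul, mul_sub, smul_mul_assoc, mul_smul_comm, one_mul, mul_one, hTG]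
      abel
    obtain ⟨X, Y, hXs, hYs, heq⟩ := hsurj T0 hT0h hT0tr
    have tr1 : (T0 * (S * X - X * S)).trace = 0 := by
      rw [trace_comm_helper]
      have : T0 * S - S * T0 = 0 := hT0S
      rw [this, zero_mul, trace_zero]
    have tr2 : (T0 * (Y * G0 - G0 * Y)).trace = 0 := by
      have e : T0 * (Y * G0 - G0 * Y) = -(T0 * (G0 * Y - Y * G0)) := by noncomm_ring
      rw [e, trace_neg, trace_comm_helper]
      have : T0 * G0 - G0 * T0 = 0 := hT0G
      rw [this, zero_mul, trace_zero, neg_zero]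
    have hsq : (T0ᴴ * T0).trace + (((0 : Matrix (Fin d) (Fin d) ℂ))ᴴ *
        (0 : Matrix (Fin d) (Fin d) ℂ)).trace = 0 := by
      rw [hT0h]
      have e2 : T0 * T0 = T0 * ((S * X - X * S) + (Y * G0 - G0 * Y)) := by rw [heq]
      rw [e2, mul_add, trace_add, tr1, tr2]
      simp
    have hT00 : T0 = 0 := (trace_sq_zero T0 0 hsq).1
    exact ⟨τ, by rwa [hT0, sub_eq_zero] at hT00⟩
  intro C hCS hCG
  have hCHS : Cᴴ * S = S * Cᴴ := by
    have h := congrArg conjTranspose hCS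
    rw [conjTranspose_mul, conjTranspose_mul, hS.eq] at h
    exact h.symm
  have hCHG : Cᴴ * G0 = G0 * Cᴴ := by
    have h := congrArg conjTranspose hCG
    rw [conjTranspose_mul, conjTranspose_mul, hG0.eq] at h
    exact h.symm
  set A : Matrix (Fin d) (Fin d) ℂ := (1/2 : ℂ) • (C + Cᴴ) with hA
  set B : Matrix (Fin d) (Fin d) ℂ := (-(Complex.I)/2 : ℂ) • (C - Cᴴ) with hB
  have hAh : Aᴴ = A := by
    rw [hA, conjTranspose_smul, conjTranspose_add, conjTranspose_conjTranspose]
    simp [add_comm]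
  have hBh : Bᴴ = B := by
    rw [hB, conjTranspose_smul, conjTranspose_sub, conjTranspose_conjTranspose]
    have h1 : star (-(Complex.I)/2 : ℂ) = Complex.I / 2 := by simp
    rw [h1]
    have h2 : (-(Complex.I)/2 : ℂ) = -(Complex.I / 2) := by ring
    rw [h2, neg_smul, ← smul_neg, neg_sub]
  have hAS : A * S = S * A := by
    rw [hA, smul_mul_assoc, mul_smul_comm, add_mul, mul_add, hCS, hCHS]
  have hAG : A * G0 = G0 * A := by
    rw [hA, smul_mul_assoc, mul_smul_comm, add_mul, mul_add, hCG, hCHG]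
  have hBS : B * S = S * B := by
    rw [hB, smul_mul_assoc, mul_smul_comm, sub_mul, mul_sub, hCS, hCHS]
  have hBG : B * G0 = G0 * B := by
    rw [hB, smul_mul_assoc, mul_smul_comm, sub_mul, mul_sub, hCG, hCHG]
  obtain ⟨a, ha⟩ := herm A hAh hAS hAG
  obtain ⟨b, hb⟩ := herm B hBh hBS hBG
  have hC : C = A + Complex.I • B := by
    rw [hA, hB, smul_smul]
    have hI : Complex.I * (-(Complex.I)/2) = 1/2 := by
      rw [neg_div, mul_neg, mul_div_assoc', Complex.I_mul_I]; norm_num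
    rw [hI]
    module
  refine ⟨a + Complex.I * b, ?_⟩
  rw [hC, ha, hb, smul_smul, ← add_smul]

lemma bwd {d : ℕ} (S G0 : Matrix (Fin d) (Fin d) ℂ)
    (hS : S.IsHermitian) (hG0 : G0.IsHermitian) (hd : d ≠ 0)
    (hcomm : ∀ C : Matrix (Fin d) (Fin d) ℂ,
        C * S = S * C → C * G0 = G0 * C → ∃ c : ℂ, C = c • (1 : Matrix (Fin d) (Fin d) ℂ)) :
    ∀ T : Matrix (Fin d) (Fin d) ℂ, T.IsHermitian → T.trace = 0 →
      ∃ X Y : Matrix (Fin d) (Fin d) ℂ, Xᴴ = -X ∧ Yᴴ = -Y ∧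
        (S * X - X * S) + (Y * G0 - G0 * Y) = T := by
  -- the submodule of Hermitian trace-zero matrices
  let V : Submodule ℝ (Matrix (Fin d) (Fin d) ℂ) :=
    { carrier := {T | Tᴴ = T ∧ T.trace = 0}
      add_mem' := by
        rintro a b ⟨ha1, ha2⟩ ⟨hb1, hb2⟩
        exact ⟨by rw [conjTranspose_add, ha1, hb1], by rw [trace_add, ha2, hb2, add_zero]⟩
      zero_mem' := ⟨by simp, by simp⟩
      smul_mem' := by
        rintro r a ⟨ha1, ha2⟩
        refine ⟨?_, by rw [trace_smul, ha2, smul_zero]⟩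
        rw [conjTranspose_smul, ha1, star_trivial] }
  let g : Matrix (Fin d) (Fin d) ℂ →ₗ[ℝ] Matrix (Fin d) (Fin d) ℂ :=
    { toFun := fun T => (S * (T * S - S * T) - (T * S - S * T) * S) +
        ((G0 * T - T * G0) * G0 - G0 * (G0 * T - T * G0))
      map_add' := by intro a b; noncomm_ring
      map_smul' := by
        intro r a
        simp only [RingHom.id_apply, mul_sub, sub_mul, mul_smul_comm, smul_mul_assoc,
          smul_sub, smul_add] }
  have hmem : ∀ T ∈ V, g T ∈ V := by
    rintro T ⟨hT1, hT2⟩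
    constructor
    · show ((S * (T * S - S * T) - (T * S - S * T) * S) +
        ((G0 * T - T * G0) * G0 - G0 * (G0 * T - T * G0)))ᴴ =
        ((S * (T * S - S * T) - (T * S - S * T) * S) +
        ((G0 * T - T * G0) * G0 - G0 * (G0 * T - T * G0)))
      simp only [conjTranspose_add, conjTranspose_sub, conjTranspose_mul, hT1,
        hS.eq, hG0.eq]
      noncomm_ring
    · show ((S * (T * S - S * T) - (T * S - S * T) * S) +
        ((G0 * T - T * G0) * G0 - G0 * (G0 * T - T * G0))).trace = 0
      have k1 : ∀ A B : Matrix (Fin d) (Fin d) ℂ, (A * B - B * A).trace = 0 := fun A B => by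
        rw [trace_sub, trace_mul_comm]; exact sub_self _
      rw [trace_add, k1, k1, add_zero]
  let f : V →ₗ[ℝ] V := g.restrict hmem
  have hinj : Function.Injective f := by
    rw [← LinearMap.ker_eq_bot, LinearMap.ker_eq_bot']
    rintro ⟨T, hT1, hT2⟩ hfT
    have hgT : g T = 0 := congrArg Subtype.val hfT
    set X : Matrix (Fin d) (Fin d) ℂ := T * S - S * T with hX
    set Y : Matrix (Fin d) (Fin d) ℂ := G0 * T - T * G0 with hY
    have hXs : Xᴴ = -X := by
      rw [hX, conjTranspose_sub, conjTranspose_mul, conjTranspose_mul, hT1, hS.eq, neg_sub]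
    have hYs : Yᴴ = -Y := by
      rw [hY, conjTranspose_sub, conjTranspose_mul, conjTranspose_mul, hT1, hG0.eq, neg_sub]
    have t1 : (T * (S * X - X * S)).trace = (X * X).trace := by
      rw [trace_comm_helper, ← hX]
    have t2 : (T * (Y * G0 - G0 * Y)).trace = (Y * Y).trace := by
      have e : T * (Y * G0 - G0 * Y) = -(T * (G0 * Y - Y * G0)) := by noncomm_ring
      rw [e, trace_neg, trace_comm_helper, ← trace_neg, ← neg_mul, neg_sub, ← hY]
    have t0 : (X * X).trace + (Y * Y).trace = 0 := by
      have : (T * g T).trace = 0 := by rw [hgT, mul_zero, trace_zero]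
      calc (X * X).trace + (Y * Y).trace
          = (T * (S * X - X * S)).trace + (T * (Y * G0 - G0 * Y)).trace := by rw [t1, t2]
        _ = (T * g T).trace := by
            show _ = (T * ((S * (T * S - S * T) - (T * S - S * T) * S) +
              ((G0 * T - T * G0) * G0 - G0 * (G0 * T - T * G0)))).trace
            rw [← hX, ← hY, mul_add, trace_add]
        _ = 0 := this
    have hsum : (Xᴴ * X).trace + (Yᴴ * Y).trace = 0 := by
      rw [hXs, hYs, neg_mul, neg_mul, trace_neg, trace_neg, ← neg_add, t0, neg_zero]
    obtain ⟨hX0, hY0⟩ := trace_sq_zero X Y hsum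
    have hTS : T * S = S * T := by rwa [hX, sub_eq_zero] at hX0
    have hTG : T * G0 = G0 * T := by
      have := hY0; rw [hY, sub_eq_zero] at this; exact this.symm
    obtain ⟨c, hc⟩ := hcomm T hTS hTG
    have : c * d = 0 := by
      have := hT2
      rw [hc, trace_smul, trace_one] at this
      simpa [Fintype.card_fin] using this
    have hc0 : c = 0 := by
      rcases mul_eq_zero.mp this with h | h
      · exact h
      · exact absurd (by exact_mod_cast h) hd
    ext1
    simp [hc, hc0]
  have hsurj : Function.Surjective f := LinearMap.injective_iff_surjective.mp hinj
  intro T hT htr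
  obtain ⟨⟨T', hT'⟩, hfT'⟩ := hsurj ⟨T, hT, htr⟩
  have hgT' : g T' = T := congrArg Subtype.val hfT'
  refine ⟨T' * S - S * T', G0 * T' - T' * G0, ?_, ?_, ?_⟩
  · rw [conjTranspose_sub, conjTranspose_mul, conjTranspose_mul, hT'.1, hS.eq, neg_sub]
  · rw [conjTranspose_sub, conjTranspose_mul, conjTranspose_mul, hT'.1, hG0.eq, neg_sub]
  · exact hgT'

/-- The differential of `Γ(U,V) = U* S U − V* G₀ V` at `(I, I)`, i.e. the real-linear map
`(X, Y) ↦ [S, X] + [Y, G₀]` on pairs of skew-adjoint matrices, is surjective onto the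
selfadjoint trace-zero matrices iff `{S, G₀}' = ℂ·I`. -/
theorem stmt_3 {d : ℕ} (S G0 : Matrix (Fin d) (Fin d) ℂ)
    (hS : S.IsHermitian) (hG0 : G0.IsHermitian) :
    (∀ T : Matrix (Fin d) (Fin d) ℂ, T.IsHermitian → T.trace = 0 →
      ∃ X Y : Matrix (Fin d) (Fin d) ℂ, Xᴴ = -X ∧ Yᴴ = -Y ∧
        (S * X - X * S) + (Y * G0 - G0 * Y) = T) ↔
      (∀ C : Matrix (Fin d) (Fin d) ℂ,
        C * S = S * C → C * G0 = G0 * C → ∃ c : ℂ, C = c • (1 : Matrix (Fin d) (Fin d) ℂ)) := by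
  rcases Nat.eq_zero_or_pos d with hd | hd
  · subst hd
    haveI : Subsingleton (Matrix (Fin 0) (Fin 0) ℂ) :=
      ⟨fun a b => by ext i j; exact i.elim0⟩
    constructor
    · intro _ C _ _; exact ⟨0, Subsingleton.elim _ _⟩
    · intro _ T _ _
      exact ⟨0, 0, Subsingleton.elim _ _, Subsingleton.elim _ _, Subsingleton.elim _ _⟩
  · exact ⟨fun h => fwd S G0 hS hG0 hd.ne' h, fun h => bwd S G0 hS hG0 hd.ne' h⟩

end LocalLidskii
end

section
/- Let A ∈ M_d(ℂ), let s ∈ ℝ^d have non-negative non-increasing entries with s ≠ 0, let B ∈ V_s, and let N be a unitarily invariant norm on M_d(ℂ). Define Ξ : U(d)^4 → ℝ_{≥0} by Ξ(U_1, U_2, V_1, V_2) = N(U_1* A V_1 − U_2* B V_2), where U(d)^4 carries the metric given by the maximum over coordinates of ‖I − U* U'‖ (operator norm). Then the following are equivalent: (1) B is a local minimizer of Ψ(C) = N(A − C) on V_s; (2) (I, I, I, I) is a local minimizer of Ξ on U(d)^4. -/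
namespace LocalLidskii

open Matrix
open scoped ComplexOrder

open Polynomial Filter
open scoped Matrix.Norms.L2Operator Topology

variable {d : ℕ}

lemma sortDesc_eq_of_multiset {n : ℕ} {x y : Fin n → ℝ}
    (h : (↑(List.ofFn x) : Multiset ℝ) = ↑(List.ofFn y)) : sortDesc x = sortDesc y := by
  have hx : List.ofFn (x ∘ Tuple.sort x) = List.ofFn (y ∘ Tuple.sort y) := by
    apply List.Perm.eq_of_sortedLE
    · exact List.sortedLE_ofFn_iff.mpr (Tuple.monotone_sort x)
    · exact List.sortedLE_ofFn_iff.mpr (Tuple.monotone_sort y)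
    · exact ((Tuple.sort x).ofFn_comp_perm x).trans
        ((Multiset.coe_eq_coe.mp h).trans ((Tuple.sort y).ofFn_comp_perm y).symm)
  have h2 : x ∘ Tuple.sort x = y ∘ Tuple.sort y := List.ofFn_injective hx
  funext i
  exact congrFun h2 i.rev

/-- Every vector is a permutation of its sorted-descending rearrangement. -/
lemma exists_perm_sortDesc {n : ℕ} (x : Fin n → ℝ) :
    ∃ σ : Equiv.Perm (Fin n), sortDesc x = x ∘ σ :=
  ⟨Fin.revPerm.trans (Tuple.sort x), rfl⟩

lemma multiset_ofFn_comp_perm {n : ℕ} {α : Type*} (f : Fin n → α) (σ : Equiv.Perm (Fin n)) :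
    (↑(List.ofFn (f ∘ σ)) : Multiset α) = ↑(List.ofFn f) :=
  Multiset.coe_eq_coe.mpr (σ.ofFn_comp_perm f)

lemma det_smul_one_sub_rep {d : ℕ} {M : Matrix (Fin d) (Fin d) ℂ}
    (W : Matrix (Fin d) (Fin d) ℂ) (hW : W ∈ Matrix.unitaryGroup (Fin d) ℂ)
    (g : Fin d → ℝ) (h : M = W * diagonal (fun i => (g i : ℂ)) * Wᴴ) (z : ℂ) :
    det (z • (1 : Matrix (Fin d) (Fin d) ℂ) - M) = ∏ i, (z - (g i : ℂ)) := by
  have hWW : W * Wᴴ = 1 := by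
    simpa [Matrix.star_eq_conjTranspose] using (Matrix.mem_unitaryGroup_iff).mp hW
  have h1 : z • (1 : Matrix (Fin d) (Fin d) ℂ) - M
      = W * (diagonal (fun i => z - (g i : ℂ))) * Wᴴ := by
    have : (diagonal (fun i => z - (g i : ℂ)) : Matrix (Fin d) (Fin d) ℂ)
        = z • 1 - diagonal (fun i => (g i : ℂ)) := by
      rw [Matrix.smul_one_eq_diagonal, Matrix.diagonal_sub]
    rw [this, h, Matrix.mul_sub, Matrix.sub_mul]
    congr 1
    rw [Matrix.mul_smul, mul_one, Matrix.smul_mul, hWW]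
  have hW'W : Wᴴ * W = 1 := by
    simpa [Matrix.star_eq_conjTranspose] using (Matrix.mem_unitaryGroup_iff').mp hW
  have hdet1 : det Wᴴ * det W = 1 := by rw [← det_mul, hW'W, det_one]
  rw [h1, det_mul, det_mul]
  calc det W * det (diagonal fun i => z - (g i : ℂ)) * det Wᴴ
      = (det Wᴴ * det W) * det (diagonal fun i => z - (g i : ℂ)) := by ring
    _ = ∏ i, (z - (g i : ℂ)) := by rw [hdet1, one_mul, det_diagonal]

lemma eigenvalues_multiset {d : ℕ} {M : Matrix (Fin d) (Fin d) ℂ} (hM : M.IsHermitian)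
    (W : Matrix (Fin d) (Fin d) ℂ) (hW : W ∈ Matrix.unitaryGroup (Fin d) ℂ)
    (g : Fin d → ℝ) (h : M = W * diagonal (fun i => (g i : ℂ)) * Wᴴ) :
    (↑(List.ofFn hM.eigenvalues) : Multiset ℝ) = ↑(List.ofFn g) := by
  -- the two complex multisets
  have hspec : M = (hM.eigenvectorUnitary : Matrix (Fin d) (Fin d) ℂ)
      * diagonal (fun i => (hM.eigenvalues i : ℂ))
      * ((hM.eigenvectorUnitary : Matrix (Fin d) (Fin d) ℂ))ᴴ := by
    have := hM.spectral_theorem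
    simpa [Matrix.star_eq_conjTranspose, Function.comp_def] using this
  have hev := det_smul_one_sub_rep (hM.eigenvectorUnitary : Matrix (Fin d) (Fin d) ℂ)
    hM.eigenvectorUnitary.2 hM.eigenvalues hspec
  have hg := det_smul_one_sub_rep W hW g h
  -- polynomial identity
  have key : ∀ (f : Fin d → ℝ),
      ((↑(List.ofFn (fun i => (f i : ℂ))) : Multiset ℂ).map (fun a => X - C a)).prod.roots
        = ↑(List.ofFn (fun i => (f i : ℂ))) := fun f =>
    roots_multiset_prod_X_sub_C _
  have hpoly : ((↑(List.ofFn (fun i => (hM.eigenvalues i : ℂ))) : Multiset ℂ).map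
        (fun a => X - C a)).prod
      = ((↑(List.ofFn (fun i => (g i : ℂ))) : Multiset ℂ).map (fun a => X - C a)).prod := by
    apply Polynomial.funext
    intro z
    have evalprod : ∀ (f : Fin d → ℝ),
        eval z ((↑(List.ofFn (fun i => (f i : ℂ))) : Multiset ℂ).map
          (fun a => X - C a)).prod = ∏ i, (z - (f i : ℂ)) := by
      intro f
      rw [eval_multiset_prod, Multiset.map_map, Multiset.map_coe, List.map_ofFn,
        Multiset.prod_coe, List.prod_ofFn]
      simp [Function.comp]
    rw [evalprod, evalprod, ← hev z, ← hg z]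
  have hroots := congrArg Polynomial.roots hpoly
  rw [key, key] at hroots
  have hC : ∀ f : Fin d → ℝ, Multiset.map (fun r : ℝ => (r : ℂ)) ↑(List.ofFn f)
      = (↑(List.ofFn (fun i => (f i : ℂ))) : Multiset ℂ) := by
    intro f; rw [Multiset.map_coe, List.map_ofFn]; rfl
  apply Multiset.map_injective Complex.ofReal_injective
  show Multiset.map (fun r : ℝ => (r : ℂ)) _ = Multiset.map (fun r : ℝ => (r : ℂ)) _
  rw [hC, hC, hroots]

lemma star_mem_ug {U : Matrix (Fin d) (Fin d) ℂ} (hU : U ∈ Matrix.unitaryGroup (Fin d) ℂ) :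
    Uᴴ ∈ Matrix.unitaryGroup (Fin d) ℂ := by
  rw [Matrix.mem_unitaryGroup_iff', Matrix.star_eq_conjTranspose, conjTranspose_conjTranspose]
  rw [Matrix.mem_unitaryGroup_iff, Matrix.star_eq_conjTranspose] at hU
  exact hU

lemma mul_mem_ug {U V : Matrix (Fin d) (Fin d) ℂ} (hU : U ∈ Matrix.unitaryGroup (Fin d) ℂ)
    (hV : V ∈ Matrix.unitaryGroup (Fin d) ℂ) : U * V ∈ Matrix.unitaryGroup (Fin d) ℂ :=
  mul_mem hU hV

lemma ug_mul_star {U : Matrix (Fin d) (Fin d) ℂ} (hU : U ∈ Matrix.unitaryGroup (Fin d) ℂ) :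
    U * Uᴴ = 1 := by
  simpa [Matrix.star_eq_conjTranspose] using (Matrix.mem_unitaryGroup_iff).mp hU

lemma ug_star_mul {U : Matrix (Fin d) (Fin d) ℂ} (hU : U ∈ Matrix.unitaryGroup (Fin d) ℂ) :
    Uᴴ * U = 1 := by
  simpa [Matrix.star_eq_conjTranspose] using (Matrix.mem_unitaryGroup_iff').mp hU

lemma spectral_rep {M : Matrix (Fin d) (Fin d) ℂ} (hM : M.IsHermitian) :
    M = (hM.eigenvectorUnitary : Matrix (Fin d) (Fin d) ℂ)
      * diagonal (fun i => (hM.eigenvalues i : ℂ))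
      * ((hM.eigenvectorUnitary : Matrix (Fin d) (Fin d) ℂ))ᴴ := by
  have := hM.spectral_theorem
  simpa [Matrix.star_eq_conjTranspose, Function.comp_def] using this

lemma multiset_map_ofFn_eq {n : ℕ} {f g : Fin n → ℝ} (q : ℝ → ℝ)
    (h : (↑(List.ofFn f) : Multiset ℝ) = ↑(List.ofFn g)) :
    (↑(List.ofFn (fun i => q (f i))) : Multiset ℝ) = ↑(List.ofFn fun i => q (g i)) := by
  have := congrArg (Multiset.map q) h
  rwa [Multiset.map_coe, Multiset.map_coe, List.map_ofFn, List.map_ofFn] at this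

lemma sv_unitary_mul (A U V : Matrix (Fin d) (Fin d) ℂ)
    (hU : U ∈ Matrix.unitaryGroup (Fin d) ℂ) (hV : V ∈ Matrix.unitaryGroup (Fin d) ℂ) :
    sv (U * A * V) = sv A := by
  have hH := Matrix.isHermitian_conjTranspose_mul_self A
  have hH' := Matrix.isHermitian_conjTranspose_mul_self (U * A * V)
  have hWmem : (hH.eigenvectorUnitary : Matrix (Fin d) (Fin d) ℂ) ∈ Matrix.unitaryGroup (Fin d) ℂ :=
    hH.eigenvectorUnitary.2
  have hrep : (U * A * V)ᴴ * (U * A * V)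
      = (Vᴴ * (hH.eigenvectorUnitary : Matrix (Fin d) (Fin d) ℂ))
        * diagonal (fun i => (hH.eigenvalues i : ℂ))
        * (Vᴴ * (hH.eigenvectorUnitary : Matrix (Fin d) (Fin d) ℂ))ᴴ := by
    have h1 : (U * A * V)ᴴ * (U * A * V) = Vᴴ * (Aᴴ * A) * V := by
      rw [conjTranspose_mul, conjTranspose_mul]
      have h0 : Vᴴ * (Aᴴ * Uᴴ) * (U * A * V) = Vᴴ * Aᴴ * (Uᴴ * U) * (A * V) := by
        noncomm_ring
      rw [show (U * A * V)ᴴ = Vᴴ * (Aᴴ * Uᴴ) by rw [conjTranspose_mul, conjTranspose_mul]] at *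
      rw [h0, ug_star_mul hU, mul_one]
      noncomm_ring
    rw [h1, conjTranspose_mul, conjTranspose_conjTranspose]
    have h2 : Vᴴ * (hH.eigenvectorUnitary : Matrix (Fin d) (Fin d) ℂ)
          * diagonal (fun i => (hH.eigenvalues i : ℂ))
          * ((hH.eigenvectorUnitary : Matrix (Fin d) (Fin d) ℂ)ᴴ * V)
        = Vᴴ * ((hH.eigenvectorUnitary : Matrix (Fin d) (Fin d) ℂ)
          * diagonal (fun i => (hH.eigenvalues i : ℂ))
          * (hH.eigenvectorUnitary : Matrix (Fin d) (Fin d) ℂ)ᴴ) * V := by noncomm_ring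
    rw [h2, ← spectral_rep hH]
  have hmul := eigenvalues_multiset hH'
    (Vᴴ * (hH.eigenvectorUnitary : Matrix (Fin d) (Fin d) ℂ))
    (mul_mem_ug (star_mem_ug hV) hWmem) hH.eigenvalues hrep
  show sortDesc _ = sortDesc _
  exact sortDesc_eq_of_multiset (multiset_map_ofFn_eq Real.sqrt hmul)

lemma exists_unitary_diag_perm (v : Fin d → ℂ) (σ : Equiv.Perm (Fin d)) :
    ∃ E ∈ Matrix.unitaryGroup (Fin d) ℂ, E * diagonal v * Eᴴ = diagonal (v ∘ σ) := by
  classical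
  refine ⟨(1 : Matrix (Fin d) (Fin d) ℂ).submatrix σ (⇑(Equiv.refl (Fin d))), ?_, ?_⟩
  · rw [Matrix.mem_unitaryGroup_iff, Matrix.star_eq_conjTranspose, conjTranspose_submatrix,
      conjTranspose_one, Matrix.one_submatrix_mul]
    simp
  · rw [Matrix.one_submatrix_mul, conjTranspose_submatrix, conjTranspose_one]
    rw [Matrix.mul_submatrix_one (Equiv.refl (Fin d)) (⇑σ)]
    simp

lemma exists_unit_near (C : Matrix (Fin d) (Fin d) ℂ) {δ : ℝ} (hδ : 0 < δ) :
    ∃ z : ℂ, ‖z‖ < δ ∧ IsUnit (C + z • 1) := by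
  by_contra hcon
  push_neg at hcon
  have hinj : Function.Injective (fun k : ℕ => -((δ / (k + 2) : ℝ) : ℂ)) := by
    intro a b hab
    simp only [neg_inj, Complex.ofReal_inj] at hab
    have ha : ((a:ℝ) + 2) ≠ 0 := by positivity
    have hb : ((b:ℝ) + 2) ≠ 0 := by positivity
    have h2 := (div_eq_div_iff ha hb).mp hab
    have h3 : (a : ℝ) = (b : ℝ) := by
      have := mul_left_cancel₀ (ne_of_gt hδ) (by linarith [h2] : δ * ((b:ℝ)+2) = δ * ((a:ℝ)+2))
      linarith
    exact_mod_cast h3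
  have hmem : ∀ k : ℕ, (fun k : ℕ => -((δ / (k + 2) : ℝ) : ℂ)) k ∈ spectrum ℂ C := by
    intro k
    have hk : (0:ℝ) < δ / (k + 2) := by positivity
    have hlt : ‖((δ / (k + 2) : ℝ) : ℂ)‖ < δ := by
      rw [Complex.norm_real, Real.norm_eq_abs, abs_of_pos hk]
      rw [div_lt_iff₀ (by positivity)]
      nlinarith
    have hnu := hcon ((δ / (k + 2) : ℝ) : ℂ) hlt
    rw [spectrum.mem_iff]
    intro hu
    apply hnu
    have : algebraMap ℂ (Matrix (Fin d) (Fin d) ℂ) (-((δ / (k + 2) : ℝ) : ℂ)) - C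
        = -(C + ((δ / (k + 2) : ℝ) : ℂ) • 1) := by
      rw [Algebra.algebraMap_eq_smul_one]
      module
    rw [this] at hu
    simpa using hu.neg
  exact (Set.infinite_range_of_injective hinj)
    ((Matrix.finite_spectrum C).subset (Set.range_subset_iff.mpr hmem))

open scoped MatrixOrder in
lemma polar_invertible (C : Matrix (Fin d) (Fin d) ℂ) (hC : IsUnit C) :
    ∃ U P : Matrix (Fin d) (Fin d) ℂ, U ∈ Matrix.unitaryGroup (Fin d) ℂ ∧
      P.PosSemidef ∧ C = U * P := by
  have hP := Matrix.posSemidef_conjTranspose_mul_self C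
  set P := CFC.sqrt (Cᴴ * C) with hPdef
  have hPP : P * P = Cᴴ * C := CFC.sqrt_mul_sqrt_self _ hP.nonneg
  have hPH : P.IsHermitian := (CFC.sqrt_nonneg (Cᴴ * C)).posSemidef.1
  have hdetC : C.det ≠ 0 := by
    have := (Matrix.isUnit_iff_isUnit_det C).mp hC
    exact IsUnit.ne_zero this
  have hdetP : IsUnit P.det := by
    rw [isUnit_iff_ne_zero]
    intro h0
    have : (Cᴴ * C).det = 0 := by rw [← hPP, Matrix.det_mul, h0, mul_zero]
    rw [Matrix.det_mul, Matrix.det_conjTranspose] at this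
    exact hdetC (by simpa [mul_eq_zero, star_eq_zero] using this)
  refine ⟨C * P⁻¹, P, ?_, (CFC.sqrt_nonneg (Cᴴ * C)).posSemidef, ?_⟩
  · rw [Matrix.mem_unitaryGroup_iff', Matrix.star_eq_conjTranspose, conjTranspose_mul,
      Matrix.conjTranspose_nonsing_inv, hPH.eq]
    calc P⁻¹ * Cᴴ * (C * P⁻¹) = P⁻¹ * (Cᴴ * C) * P⁻¹ := by noncomm_ring
      _ = P⁻¹ * (P * P) * P⁻¹ := by rw [hPP]
      _ = (P⁻¹ * P) * (P * P⁻¹) := by noncomm_ring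
      _ = 1 := by rw [Matrix.nonsing_inv_mul P hdetP, Matrix.mul_nonsing_inv P hdetP, one_mul]
  · rw [mul_assoc, Matrix.nonsing_inv_mul P hdetP, mul_one]

lemma norm_one_le : ‖(1 : Matrix (Fin d) (Fin d) ℂ)‖ ≤ 1 := by
  rw [Matrix.cstar_norm_def, _root_.map_one]
  exact ContinuousLinearMap.norm_id_le

lemma norm_le_one_of_ug {U : Matrix (Fin d) (Fin d) ℂ}
    (hU : U ∈ Matrix.unitaryGroup (Fin d) ℂ) : ‖U‖ ≤ 1 := by
  have h1 : ‖U‖ * ‖U‖ = ‖Uᴴ * U‖ := (Matrix.l2_opNorm_conjTranspose_mul_self U).symm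
  have h2 : Uᴴ * U = 1 := by
    simpa [Matrix.star_eq_conjTranspose] using (Matrix.mem_unitaryGroup_iff').mp hU
  rw [h2] at h1
  nlinarith [norm_one_le (d := d), norm_nonneg U]

lemma tendsto_conjT {f : ℕ → Matrix (Fin d) (Fin d) ℂ} {X : Matrix (Fin d) (Fin d) ℂ}
    (h : Tendsto f atTop (𝓝 X)) : Tendsto (fun n => (f n)ᴴ) atTop (𝓝 Xᴴ) := by
  rw [tendsto_iff_dist_tendsto_zero] at h ⊢
  convert h using 2 with n
  rw [dist_eq_norm, dist_eq_norm, ← conjTranspose_sub, Matrix.l2_opNorm_conjTranspose]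

lemma psd_of_tendsto {f : ℕ → Matrix (Fin d) (Fin d) ℂ} {X : Matrix (Fin d) (Fin d) ℂ}
    (hf : ∀ n, (f n).PosSemidef) (h : Tendsto f atTop (𝓝 X)) : X.PosSemidef := by
  rw [Matrix.posSemidef_iff_dotProduct_mulVec]
  constructor
  · have h1 : Tendsto (fun n => (f n)ᴴ) atTop (𝓝 Xᴴ) := tendsto_conjT h
    have h2 : (fun n => (f n)ᴴ) = f := by funext n; exact (hf n).1
    rw [h2] at h1
    exact tendsto_nhds_unique h1 h
  · intro x
    let φ : Matrix (Fin d) (Fin d) ℂ →ₗ[ℂ] ℂ :=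
      { toFun := fun M => dotProduct (star x) (M *ᵥ x)
        map_add' := by intro M N; show star x ⬝ᵥ (M + N) *ᵥ x = _; rw [Matrix.add_mulVec, dotProduct_add]
        map_smul' := by intro c M; show star x ⬝ᵥ (c • M) *ᵥ x = _; rw [Matrix.smul_mulVec, dotProduct_smul]; rfl }
    have hφ : Continuous φ := φ.continuous_of_finiteDimensional
    have hφt : Tendsto (fun n => φ (f n)) atTop (𝓝 (φ X)) := (hφ.tendsto X).comp h
    have him : (φ X).im = 0 := by
      have h1 : Tendsto (fun n => (φ (f n)).im) atTop (𝓝 (φ X).im) :=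
        (Complex.continuous_im.tendsto _).comp hφt
      have h2 : (fun n => (φ (f n)).im) = fun _ => 0 := by
        funext n
        have := (hf n).dotProduct_mulVec_nonneg x
        rw [Complex.le_def] at this
        exact this.2.symm
      rw [h2] at h1
      exact tendsto_nhds_unique h1 tendsto_const_nhds
    have hre : 0 ≤ (φ X).re := by
      have h1 : Tendsto (fun n => (φ (f n)).re) atTop (𝓝 (φ X).re) :=
        (Complex.continuous_re.tendsto _).comp hφt
      apply ge_of_tendsto h1
      filter_upwards with n
      have := (hf n).dotProduct_mulVec_nonneg x
      rw [Complex.le_def] at this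
      exact this.1
    show (0 : ℂ) ≤ φ X
    rw [Complex.le_def]
    constructor
    · simpa using hre
    · simpa using him.symm

lemma isCompact_ug : IsCompact {U : Matrix (Fin d) (Fin d) ℂ | U ∈ Matrix.unitaryGroup (Fin d) ℂ} := by
  haveI : ProperSpace (Matrix (Fin d) (Fin d) ℂ) := FiniteDimensional.proper ℂ _
  apply IsCompact.of_isClosed_subset (isCompact_closedBall (0 : Matrix (Fin d) (Fin d) ℂ) 1)
  · -- closedness
    rw [← isSeqClosed_iff_isClosed]
    intro f X hf hX
    show X ∈ Matrix.unitaryGroup (Fin d) ℂ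
    rw [Matrix.mem_unitaryGroup_iff', Matrix.star_eq_conjTranspose]
    have h1 : Tendsto (fun n => (f n)ᴴ * f n) atTop (𝓝 (Xᴴ * X)) :=
      Tendsto.mul (tendsto_conjT hX) hX
    have h2 : (fun n => (f n)ᴴ * f n) = fun _ => 1 := by
      funext n
      have h3 : f n ∈ Matrix.unitaryGroup (Fin d) ℂ := hf n
      rwa [Matrix.mem_unitaryGroup_iff', Matrix.star_eq_conjTranspose] at h3
    rw [h2] at h1
    exact tendsto_nhds_unique h1 tendsto_const_nhds
  · intro U hU
    rw [Metric.mem_closedBall, dist_zero_right]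
    exact norm_le_one_of_ug hU

lemma tendsto_approx (C : Matrix (Fin d) (Fin d) ℂ) (z : ℕ → ℂ)
    (hz : ∀ n, ‖z n‖ < 1 / (n + 1)) :
    Tendsto (fun n => C + z n • (1 : Matrix (Fin d) (Fin d) ℂ)) atTop (𝓝 C) := by
  rw [tendsto_iff_dist_tendsto_zero]
  apply squeeze_zero (fun n => dist_nonneg) (g := fun n : ℕ => 1 / (n + 1))
  · intro n
    rw [dist_eq_norm]
    have h1 : C + z n • (1 : Matrix (Fin d) (Fin d) ℂ) - C = z n • 1 := by abel
    rw [h1]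
    calc ‖z n • (1 : Matrix (Fin d) (Fin d) ℂ)‖ = ‖z n‖ * ‖(1 : Matrix (Fin d) (Fin d) ℂ)‖ :=
          norm_smul _ _
      _ ≤ ‖z n‖ * 1 := by
          apply mul_le_mul_of_nonneg_left norm_one_le (norm_nonneg _)
      _ ≤ 1 / (n + 1) := by rw [mul_one]; exact le_of_lt (hz n)
  · exact tendsto_one_div_add_atTop_nhds_zero_nat

lemma polar (C : Matrix (Fin d) (Fin d) ℂ) :
    ∃ U P : Matrix (Fin d) (Fin d) ℂ, U ∈ Matrix.unitaryGroup (Fin d) ℂ ∧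
      P.PosSemidef ∧ C = U * P := by
  have hex : ∀ n : ℕ, ∃ zUP : ℂ × Matrix (Fin d) (Fin d) ℂ × Matrix (Fin d) (Fin d) ℂ,
      ‖zUP.1‖ < 1 / (n + 1) ∧ zUP.2.1 ∈ Matrix.unitaryGroup (Fin d) ℂ ∧ zUP.2.2.PosSemidef ∧
      C + zUP.1 • 1 = zUP.2.1 * zUP.2.2 := by
    intro n
    obtain ⟨z, hz, hu⟩ := exists_unit_near C (δ := 1 / (n + 1)) (by positivity)
    obtain ⟨U, P, hU, hP, heq⟩ := polar_invertible _ hu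
    exact ⟨⟨z, U, P⟩, hz, hU, hP, heq⟩
  choose zUP hz hU hPsd hCn using hex
  set z : ℕ → ℂ := fun n => (zUP n).1
  set Useq : ℕ → Matrix (Fin d) (Fin d) ℂ := fun n => (zUP n).2.1
  set Pseq : ℕ → Matrix (Fin d) (Fin d) ℂ := fun n => (zUP n).2.2
  have hCt : Tendsto (fun n => C + z n • (1 : Matrix (Fin d) (Fin d) ℂ)) atTop (𝓝 C) :=
    tendsto_approx C z hz
  obtain ⟨u, hu, g, hg, hconv⟩ := isCompact_ug.tendsto_subseq (x := Useq) hU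
  have humem : u ∈ Matrix.unitaryGroup (Fin d) ℂ := hu
  refine ⟨u, uᴴ * C, humem, ?_, ?_⟩
  · -- PSD
    have hPn : ∀ n, Pseq n = (Useq n)ᴴ * (C + z n • 1) := by
      intro n
      rw [hCn n, ← mul_assoc, ug_star_mul (hU n), one_mul]
    have h2 : Tendsto (fun k => (Useq (g k))ᴴ * (C + z (g k) • 1)) atTop (𝓝 (uᴴ * C)) := by
      exact Tendsto.mul (tendsto_conjT hconv) (hCt.comp hg.tendsto_atTop)
    have h3 : Tendsto (fun k => Pseq (g k)) atTop (𝓝 (uᴴ * C)) := by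
      simpa [← hPn] using h2
    exact psd_of_tendsto (fun k => hPsd (g k)) h3
  · rw [← mul_assoc, ug_mul_star humem, one_mul]

lemma svd (C : Matrix (Fin d) (Fin d) ℂ) :
    ∃ U V : Matrix (Fin d) (Fin d) ℂ, U ∈ Matrix.unitaryGroup (Fin d) ℂ ∧
      V ∈ Matrix.unitaryGroup (Fin d) ℂ ∧
      C = U * diagonal (fun i => (sv C i : ℂ)) * V := by
  obtain ⟨U₀, P, hU₀, hP, hCP⟩ := polar C
  have hPH : P.IsHermitian := hP.1
  have hWmem : (hPH.eigenvectorUnitary : Matrix (Fin d) (Fin d) ℂ)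
      ∈ Matrix.unitaryGroup (Fin d) ℂ := hPH.eigenvectorUnitary.2
  -- CᴴC = P * P, and its eigenvalue multiset is that of evP squared
  have hCC : Cᴴ * C = (hPH.eigenvectorUnitary : Matrix (Fin d) (Fin d) ℂ)
      * diagonal (fun i => ((hPH.eigenvalues i * hPH.eigenvalues i : ℝ) : ℂ))
      * ((hPH.eigenvectorUnitary : Matrix (Fin d) (Fin d) ℂ))ᴴ := by
    have h1 : Cᴴ * C = P * P := by
      rw [hCP, conjTranspose_mul]
      calc Pᴴ * U₀ᴴ * (U₀ * P) = Pᴴ * (U₀ᴴ * U₀) * P := by noncomm_ring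
        _ = P * P := by rw [ug_star_mul hU₀, mul_one, hPH.eq]
    rw [h1]
    conv_lhs => rw [spectral_rep hPH]
    have hdd : (diagonal (fun i => (hPH.eigenvalues i : ℂ)) : Matrix (Fin d) (Fin d) ℂ)
        * diagonal (fun i => (hPH.eigenvalues i : ℂ))
        = diagonal (fun i => ((hPH.eigenvalues i * hPH.eigenvalues i : ℝ) : ℂ)) := by
      rw [diagonal_mul_diagonal]
      congr 1
      funext i
      push_cast
      ring
    calc (hPH.eigenvectorUnitary : Matrix (Fin d) (Fin d) ℂ)
          * diagonal (fun i => (hPH.eigenvalues i : ℂ))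
          * ((hPH.eigenvectorUnitary : Matrix (Fin d) (Fin d) ℂ))ᴴ
          * ((hPH.eigenvectorUnitary : Matrix (Fin d) (Fin d) ℂ)
          * diagonal (fun i => (hPH.eigenvalues i : ℂ))
          * ((hPH.eigenvectorUnitary : Matrix (Fin d) (Fin d) ℂ))ᴴ)
        = (hPH.eigenvectorUnitary : Matrix (Fin d) (Fin d) ℂ)
          * diagonal (fun i => (hPH.eigenvalues i : ℂ))
          * (((hPH.eigenvectorUnitary : Matrix (Fin d) (Fin d) ℂ))ᴴ
            * (hPH.eigenvectorUnitary : Matrix (Fin d) (Fin d) ℂ))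
          * diagonal (fun i => (hPH.eigenvalues i : ℂ))
          * ((hPH.eigenvectorUnitary : Matrix (Fin d) (Fin d) ℂ))ᴴ := by noncomm_ring
      _ = (hPH.eigenvectorUnitary : Matrix (Fin d) (Fin d) ℂ)
          * diagonal (fun i => ((hPH.eigenvalues i * hPH.eigenvalues i : ℝ) : ℂ))
          * ((hPH.eigenvectorUnitary : Matrix (Fin d) (Fin d) ℂ))ᴴ := by
          rw [ug_star_mul hWmem, mul_one, mul_assoc _ (diagonal _) (diagonal _), hdd]
  have hmulset := eigenvalues_multiset (Matrix.isHermitian_conjTranspose_mul_self C)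
    (hPH.eigenvectorUnitary : Matrix (Fin d) (Fin d) ℂ) hWmem
    (fun i => hPH.eigenvalues i * hPH.eigenvalues i) hCC
  -- sv C = sortDesc evP
  have hsv : sv C = sortDesc hPH.eigenvalues := by
    have h2 := multiset_map_ofFn_eq Real.sqrt hmulset
    have h3 : (fun i => Real.sqrt (hPH.eigenvalues i * hPH.eigenvalues i)) = hPH.eigenvalues := by
      funext i
      exact Real.sqrt_mul_self (hP.eigenvalues_nonneg i)
    rw [h3] at h2
    exact sortDesc_eq_of_multiset h2
  obtain ⟨σ, hσ⟩ := exists_perm_sortDesc hPH.eigenvalues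
  obtain ⟨E, hE, hEdiag⟩ := exists_unitary_diag_perm (fun i => (hPH.eigenvalues i : ℂ)) σ
  have hdiagC : diagonal (fun i => (sv C i : ℂ))
      = E * diagonal (fun i => (hPH.eigenvalues i : ℂ)) * Eᴴ := by
    rw [hEdiag]
    congr 1
    funext i
    rw [hsv, hσ]
    rfl
  refine ⟨U₀ * (hPH.eigenvectorUnitary : Matrix (Fin d) (Fin d) ℂ) * Eᴴ,
    E * ((hPH.eigenvectorUnitary : Matrix (Fin d) (Fin d) ℂ))ᴴ,
    mul_mem_ug (mul_mem_ug hU₀ hWmem) (star_mem_ug hE),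
    mul_mem_ug hE (star_mem_ug hWmem), ?_⟩
  rw [hdiagC, hCP]
  conv_lhs => rw [spectral_rep hPH]
  calc U₀ * ((hPH.eigenvectorUnitary : Matrix (Fin d) (Fin d) ℂ)
        * diagonal (fun i => (hPH.eigenvalues i : ℂ))
        * ((hPH.eigenvectorUnitary : Matrix (Fin d) (Fin d) ℂ))ᴴ)
      = U₀ * (hPH.eigenvectorUnitary : Matrix (Fin d) (Fin d) ℂ) * ((Eᴴ * E)
        * diagonal (fun i => (hPH.eigenvalues i : ℂ)) * (Eᴴ * E))
        * ((hPH.eigenvectorUnitary : Matrix (Fin d) (Fin d) ℂ))ᴴ := by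
        rw [ug_star_mul hE]; noncomm_ring
    _ = U₀ * (hPH.eigenvectorUnitary : Matrix (Fin d) (Fin d) ℂ) * Eᴴ
        * (E * diagonal (fun i => (hPH.eigenvalues i : ℂ)) * Eᴴ)
        * (E * ((hPH.eigenvectorUnitary : Matrix (Fin d) (Fin d) ℂ))ᴴ) := by noncomm_ring

lemma sv_eq_equiv {C B : Matrix (Fin d) (Fin d) ℂ} (h : sv C = sv B) :
    ∃ S T : Matrix (Fin d) (Fin d) ℂ, S ∈ Matrix.unitaryGroup (Fin d) ℂ ∧
      T ∈ Matrix.unitaryGroup (Fin d) ℂ ∧ C = S * B * T := by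
  obtain ⟨U₁, V₁, hU₁, hV₁, hC⟩ := svd C
  obtain ⟨U₂, V₂, hU₂, hV₂, hB⟩ := svd B
  rw [h] at hC
  have hD : diagonal (fun i => (sv B i : ℂ)) = U₂ᴴ * B * V₂ᴴ := by
    conv_rhs => rw [hB]
    symm
    calc U₂ᴴ * (U₂ * diagonal (fun i => (sv B i : ℂ)) * V₂) * V₂ᴴ
        = (U₂ᴴ * U₂) * diagonal (fun i => (sv B i : ℂ)) * (V₂ * V₂ᴴ) := by noncomm_ring
      _ = diagonal (fun i => (sv B i : ℂ)) := by
          rw [ug_star_mul hU₂, ug_mul_star hV₂, one_mul, mul_one]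
  refine ⟨U₁ * U₂ᴴ, V₂ᴴ * V₁, mul_mem_ug hU₁ (star_mem_ug hU₂),
    mul_mem_ug (star_mem_ug hV₂) hV₁, ?_⟩
  rw [hC, hD]
  noncomm_ring

lemma opNorm_eq (A : Matrix (Fin d) (Fin d) ℂ) : opNorm A = ‖A‖ :=
  (Matrix.cstar_norm_def A).symm


/-- `B` is a local minimizer of `Ψ(C) = N(A − C)` on `V_s` iff `(I,I,I,I)` is a local
minimizer of `Ξ(U₁,U₂,V₁,V₂) = N(U₁* A V₁ − U₂* B V₂)` on `U(d)⁴`. -/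
theorem stmt_7 {d : ℕ} (N : Matrix (Fin d) (Fin d) ℂ → ℝ) (hN : IsUINorm d N)
    (A : Matrix (Fin d) (Fin d) ℂ) (s : Fin d → ℝ)
    (hs : Antitone s) (hs0 : ∀ i, 0 ≤ s i) (hsne : s ≠ 0)
    (B : Matrix (Fin d) (Fin d) ℂ) (hB : sv B = s) :
    (∃ ε > 0, ∀ C : Matrix (Fin d) (Fin d) ℂ, sv C = s → opNorm (C - B) < ε →
      N (A - B) ≤ N (A - C)) ↔
      (∃ ε > 0, ∀ U1 U2 V1 V2 : Matrix (Fin d) (Fin d) ℂ,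
        U1 ∈ Matrix.unitaryGroup (Fin d) ℂ → U2 ∈ Matrix.unitaryGroup (Fin d) ℂ →
        V1 ∈ Matrix.unitaryGroup (Fin d) ℂ → V2 ∈ Matrix.unitaryGroup (Fin d) ℂ →
        max (max (opNorm (1 - U1ᴴ)) (opNorm (1 - U2ᴴ)))
            (max (opNorm (1 - V1ᴴ)) (opNorm (1 - V2ᴴ))) < ε →
        N (A - B) ≤ N (U1ᴴ * A * V1 - U2ᴴ * B * V2)) := by
  constructor
  · rintro ⟨ε, hε, hloc⟩
    refine ⟨ε / (4 * ‖B‖ + 1), by positivity, ?_⟩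
    intro U1 U2 V1 V2 hU1 hU2 hV1 hV2 hmax
    set δ := ε / (4 * ‖B‖ + 1) with hδdef
    have hδpos : 0 < δ := by positivity
    simp only [opNorm_eq] at hmax
    have h1 : ‖(1 : Matrix (Fin d) (Fin d) ℂ) - U1ᴴ‖ < δ :=
      lt_of_le_of_lt (le_max_left _ _) (lt_of_le_of_lt (le_max_left _ _) hmax)
    have h2 : ‖(1 : Matrix (Fin d) (Fin d) ℂ) - U2ᴴ‖ < δ :=
      lt_of_le_of_lt (le_max_right _ _) (lt_of_le_of_lt (le_max_left _ _) hmax)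
    have h3 : ‖(1 : Matrix (Fin d) (Fin d) ℂ) - V1ᴴ‖ < δ :=
      lt_of_le_of_lt (le_max_left _ _) (lt_of_le_of_lt (le_max_right _ _) hmax)
    have h4 : ‖(1 : Matrix (Fin d) (Fin d) ℂ) - V2ᴴ‖ < δ :=
      lt_of_le_of_lt (le_max_right _ _) (lt_of_le_of_lt (le_max_right _ _) hmax)
    set W := U1 * U2ᴴ with hWdef
    set T := V2 * V1ᴴ with hTdef
    set C := W * B * T with hCdef
    have hWmem : W ∈ Matrix.unitaryGroup (Fin d) ℂ := mul_mem_ug hU1 (star_mem_ug hU2)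
    have hTmem : T ∈ Matrix.unitaryGroup (Fin d) ℂ := mul_mem_ug hV2 (star_mem_ug hV1)
    -- Ξ value equals Ψ value at C
    have hNeq : N (U1ᴴ * A * V1 - U2ᴴ * B * V2) = N (A - C) := by
      rw [← hN.unitary_invariant (U1ᴴ * A * V1 - U2ᴴ * B * V2) U1 V1ᴴ hU1 (star_mem_ug hV1)]
      congr 1
      rw [Matrix.mul_sub, Matrix.sub_mul]
      congr 1
      · calc U1 * (U1ᴴ * A * V1) * V1ᴴ = (U1 * U1ᴴ) * A * (V1 * V1ᴴ) := by noncomm_ring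
          _ = A := by rw [ug_mul_star hU1, ug_mul_star hV1, one_mul, mul_one]
      · rw [hCdef, hWdef, hTdef]; noncomm_ring
    -- singular values of C
    have hsvC : sv C = s := by rw [hCdef, sv_unitary_mul B W T hWmem hTmem, hB]
    -- distance bound
    have hWbd : ‖W - 1‖ ≤ ‖(1 : Matrix (Fin d) (Fin d) ℂ) - U1ᴴ‖
        + ‖(1 : Matrix (Fin d) (Fin d) ℂ) - U2ᴴ‖ := by
      have e1 : W - 1 = U1 * (U2ᴴ - U1ᴴ) := by
        rw [hWdef, Matrix.mul_sub, ug_mul_star hU1]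
      rw [e1]
      calc ‖U1 * (U2ᴴ - U1ᴴ)‖ ≤ ‖U1‖ * ‖U2ᴴ - U1ᴴ‖ := norm_mul_le _ _
        _ ≤ 1 * ‖U2ᴴ - U1ᴴ‖ := by
            apply mul_le_mul_of_nonneg_right (norm_le_one_of_ug hU1) (norm_nonneg _)
        _ = ‖(1 - U1ᴴ) - (1 - U2ᴴ)‖ := by rw [one_mul]; congr 1; abel
        _ ≤ ‖(1 : Matrix (Fin d) (Fin d) ℂ) - U1ᴴ‖
            + ‖(1 : Matrix (Fin d) (Fin d) ℂ) - U2ᴴ‖ := norm_sub_le _ _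
    have hTbd : ‖T - 1‖ ≤ ‖(1 : Matrix (Fin d) (Fin d) ℂ) - V1ᴴ‖
        + ‖(1 : Matrix (Fin d) (Fin d) ℂ) - V2ᴴ‖ := by
      have e1 : T - 1 = V2 * (V1ᴴ - V2ᴴ) := by
        rw [hTdef, Matrix.mul_sub, ug_mul_star hV2]
      rw [e1]
      calc ‖V2 * (V1ᴴ - V2ᴴ)‖ ≤ ‖V2‖ * ‖V1ᴴ - V2ᴴ‖ := norm_mul_le _ _
        _ ≤ 1 * ‖V1ᴴ - V2ᴴ‖ := by
            apply mul_le_mul_of_nonneg_right (norm_le_one_of_ug hV2) (norm_nonneg _)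
        _ = ‖(1 - V2ᴴ) - (1 - V1ᴴ)‖ := by rw [one_mul]; congr 1; abel
        _ ≤ ‖(1 : Matrix (Fin d) (Fin d) ℂ) - V2ᴴ‖
            + ‖(1 : Matrix (Fin d) (Fin d) ℂ) - V1ᴴ‖ := norm_sub_le _ _
        _ = _ := by ring
    have hCB : ‖C - B‖ < ε := by
      have e1 : C - B = (W - 1) * (B * T) + B * (T - 1) := by
        rw [hCdef]; noncomm_ring
      have hBT : ‖B * T‖ ≤ ‖B‖ := by
        calc ‖B * T‖ ≤ ‖B‖ * ‖T‖ := norm_mul_le _ _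
          _ ≤ ‖B‖ * 1 := mul_le_mul_of_nonneg_left (norm_le_one_of_ug hTmem) (norm_nonneg _)
          _ = ‖B‖ := mul_one _
      have key : ‖C - B‖ ≤ (‖W - 1‖ + ‖T - 1‖) * ‖B‖ := by
        rw [e1]
        calc ‖(W - 1) * (B * T) + B * (T - 1)‖
            ≤ ‖(W - 1) * (B * T)‖ + ‖B * (T - 1)‖ := norm_add_le _ _
          _ ≤ ‖W - 1‖ * ‖B * T‖ + ‖B‖ * ‖T - 1‖ :=
              add_le_add (norm_mul_le _ _) (norm_mul_le _ _)
          _ ≤ ‖W - 1‖ * ‖B‖ + ‖B‖ * ‖T - 1‖ := by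
              have := mul_le_mul_of_nonneg_left hBT (norm_nonneg (W - 1))
              linarith
          _ = (‖W - 1‖ + ‖T - 1‖) * ‖B‖ := by ring
      have h5 : ‖W - 1‖ + ‖T - 1‖ < 4 * δ := by linarith
      have h6 : (‖W - 1‖ + ‖T - 1‖) * ‖B‖ ≤ (‖W - 1‖ + ‖T - 1‖) * ‖B‖ := le_refl _
      have h7 : ‖C - B‖ < 4 * δ * ‖B‖ + δ := by
        nlinarith [norm_nonneg B, norm_nonneg (W - 1), norm_nonneg (T - 1)]
      have h8 : 4 * δ * ‖B‖ + δ = ε := by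
        rw [hδdef]; field_simp
      linarith
    have := hloc C hsvC (by rw [opNorm_eq]; exact hCB)
    rw [hNeq]
    exact this
  · rintro ⟨ε, hε, hloc⟩
    by_contra hcon
    push_neg at hcon
    have hseq : ∀ n : ℕ, ∃ C, sv C = s ∧ opNorm (C - B) < 1 / (n + 1) ∧
        N (A - C) < N (A - B) := by
      intro n
      obtain ⟨C, h1, h2, h3⟩ := hcon (1 / (n + 1)) (by positivity)
      exact ⟨C, h1, h2, h3⟩
    choose Cs hsv hnear hlt using hseq
    have hequiv : ∀ n, ∃ S T : Matrix (Fin d) (Fin d) ℂ,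
        S ∈ Matrix.unitaryGroup (Fin d) ℂ ∧ T ∈ Matrix.unitaryGroup (Fin d) ℂ ∧
        Cs n = S * B * T := fun n => sv_eq_equiv (by rw [hsv n, hB])
    choose S T hS hT hrep using hequiv
    obtain ⟨u, hu, g, hg, hconvS⟩ := isCompact_ug.tendsto_subseq hS
    obtain ⟨v, hv, g', hg', hconvT⟩ :=
      isCompact_ug.tendsto_subseq (x := fun k => T (g k)) (fun k => hT (g k))
    have humem : u ∈ Matrix.unitaryGroup (Fin d) ℂ := hu
    have hvmem : v ∈ Matrix.unitaryGroup (Fin d) ℂ := hv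
    set gg : ℕ → ℕ := g ∘ g' with hggdef
    have hggmono : StrictMono gg := hg.comp hg'
    have hSt : Tendsto (fun k => S (gg k)) atTop (𝓝 u) := hconvS.comp hg'.tendsto_atTop
    have hTt : Tendsto (fun k => T (gg k)) atTop (𝓝 v) := hconvT
    -- Cs (gg k) → B
    have hCt : Tendsto (fun k => Cs (gg k)) atTop (𝓝 B) := by
      rw [tendsto_iff_dist_tendsto_zero]
      apply squeeze_zero (fun n => dist_nonneg) (g := fun k : ℕ => 1 / (gg k + 1))
      · intro k
        rw [dist_eq_norm, ← opNorm_eq]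
        exact le_of_lt (hnear (gg k))
      · have h0 : Tendsto (fun k : ℕ => 1 / ((k : ℝ) + 1)) atTop (𝓝 0) :=
          tendsto_one_div_add_atTop_nhds_zero_nat
        apply h0.comp
        exact hggmono.tendsto_atTop
      -- note: need coercion care
    have hlim : u * B * v = B := by
      have hst : Tendsto (fun k => S (gg k) * B * T (gg k)) atTop (𝓝 (u * B * v)) :=
        (hSt.mul tendsto_const_nhds).mul hTt
      have : (fun k => S (gg k) * B * T (gg k)) = fun k => Cs (gg k) := by
        funext k; rw [← hrep (gg k)]
      rw [this] at hst
      exact tendsto_nhds_unique hst hCt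
    have hBrep : uᴴ * B * vᴴ = B := by
      calc uᴴ * B * vᴴ = uᴴ * (u * B * v) * vᴴ := by rw [hlim]
        _ = (uᴴ * u) * B * (v * vᴴ) := by noncomm_ring
        _ = B := by rw [ug_star_mul humem, ug_mul_star hvmem, one_mul, mul_one]
    -- perturbed representation
    set Wn : ℕ → Matrix (Fin d) (Fin d) ℂ := fun k => S (gg k) * uᴴ with hWndef
    set Qn : ℕ → Matrix (Fin d) (Fin d) ℂ := fun k => vᴴ * T (gg k) with hQndef
    have hWnrep : ∀ k, Cs (gg k) = Wn k * B * Qn k := by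
      intro k
      rw [hWndef, hQndef, hrep (gg k)]
      simp only
      calc S (gg k) * B * T (gg k) = S (gg k) * (uᴴ * B * vᴴ) * T (gg k) := by rw [hBrep]
        _ = S (gg k) * uᴴ * B * (vᴴ * T (gg k)) := by noncomm_ring
    have hWt : Tendsto Wn atTop (𝓝 1) := by
      have := hSt.mul (tendsto_const_nhds (x := uᴴ))
      rwa [ug_mul_star humem] at this
    have hQt : Tendsto Qn atTop (𝓝 1) := by
      have := (tendsto_const_nhds (x := vᴴ)).mul hTt
      rwa [ug_star_mul hvmem] at this
    have hQHt : Tendsto (fun k => (Qn k)ᴴ) atTop (𝓝 1) := by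
      have := tendsto_conjT hQt
      rwa [conjTranspose_one] at this
    -- eventually both within ε
    have hev1 : ∀ᶠ k in atTop, ‖(1 : Matrix (Fin d) (Fin d) ℂ) - Wn k‖ < ε := by
      have := (tendsto_iff_dist_tendsto_zero.mp hWt).eventually (gt_mem_nhds hε)
      filter_upwards [this] with k hk
      rw [dist_eq_norm, norm_sub_rev] at hk
      exact hk
    have hev2 : ∀ᶠ k in atTop, ‖(1 : Matrix (Fin d) (Fin d) ℂ) - (Qn k)ᴴ‖ < ε := by
      have := (tendsto_iff_dist_tendsto_zero.mp hQHt).eventually (gt_mem_nhds hε)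
      filter_upwards [this] with k hk
      rw [dist_eq_norm, norm_sub_rev] at hk
      exact hk
    obtain ⟨k, hk1, hk2⟩ := (hev1.and hev2).exists
    -- apply the hypothesis
    have hWk : (Wn k)ᴴ ∈ Matrix.unitaryGroup (Fin d) ℂ :=
      star_mem_ug (mul_mem_ug (hS (gg k)) (star_mem_ug humem))
    have hQk : Qn k ∈ Matrix.unitaryGroup (Fin d) ℂ :=
      mul_mem_ug (star_mem_ug hvmem) (hT (gg k))
    have h1mem : (1 : Matrix (Fin d) (Fin d) ℂ) ∈ Matrix.unitaryGroup (Fin d) ℂ := one_mem _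
    have happ := hloc 1 ((Wn k)ᴴ) 1 (Qn k) h1mem hWk h1mem hQk ?_
    · rw [conjTranspose_one, one_mul, mul_one, conjTranspose_conjTranspose,
        ← hWnrep k] at happ
      exact absurd happ (not_le.mpr (hlt (gg k)))
    · rw [conjTranspose_one, sub_self, conjTranspose_conjTranspose]
      simp only [opNorm_eq]
      have hz : ‖(0 : Matrix (Fin d) (Fin d) ℂ)‖ = 0 := norm_zero
      rw [hz]
      apply max_lt <;> apply max_lt
      · exact hε
      · exact hk1
      · exact hε
      · exact hk2

end LocalLidskii
end

section
/- Let A, B ∈ M_d(ℂ). The real-linear map sending a quadruple (X_1, X_2, Y_1, Y_2) of skew-adjoint d×d complex matrices to −X_1 A + A Y_1 + X_2 B − B Y_2 ∈ M_d(ℂ) is surjective onto M_d(ℂ) if and only if the only matrix Z ∈ M_d(ℂ) such that A*Z, AZ*, B*Z and BZ* are all selfadjoint is Z = 0. -/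
namespace LocalLidskii

open Matrix
open scoped ComplexOrder

variable {d : ℕ}

lemma eq_zero_of_trace_re (N : Matrix (Fin d) (Fin d) ℂ)
    (h : (Matrix.trace (Nᴴ * N)).re = 0) : N = 0 := by
  have key : ∑ i, ∑ j, Complex.normSq (N j i) = 0 := by
    have h0 : (Matrix.trace (Nᴴ * N)).re = ∑ i, ∑ j, Complex.normSq (N j i) := by
      simp [Matrix.trace, Matrix.diag, Matrix.mul_apply, Matrix.conjTranspose_apply,
        Complex.ext_iff, Complex.normSq_apply, mul_comm]
    rw [← h0, h]
  ext i j
  have h1 : ∀ i ∈ Finset.univ, ∑ j, Complex.normSq (N j i) = 0 := by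
    intro i _
    refine (Finset.sum_eq_zero_iff_of_nonneg ?_).mp key i (Finset.mem_univ i)
    intro k _
    exact Finset.sum_nonneg fun l _ => Complex.normSq_nonneg _
  have h2 := (Finset.sum_eq_zero_iff_of_nonneg
    (fun k _ => Complex.normSq_nonneg _)).mp (h1 j (Finset.mem_univ j)) i (Finset.mem_univ i)
  simpa using Complex.normSq_eq_zero.mp h2

lemma re_trace_skew_iff (M : Matrix (Fin d) (Fin d) ℂ) :
    (∀ X : Matrix (Fin d) (Fin d) ℂ, Xᴴ = -X → (Matrix.trace (M * X)).re = 0) ↔ Mᴴ = M := by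
  constructor
  · intro h
    set N := Mᴴ - M with hN
    have hNs : Nᴴ = -N := by simp [hN]
    have h1 : (Matrix.trace (M * N)).re = 0 := h N hNs
    have e1 : Matrix.trace (Mᴴ * N) = -star (Matrix.trace (M * N)) := by
      have t1 : Matrix.trace (Mᴴ * N) = star (Matrix.trace (Nᴴ * M)) := by
        rw [← Matrix.trace_conjTranspose, Matrix.conjTranspose_mul, Matrix.conjTranspose_conjTranspose]
      rw [t1, hNs, Matrix.neg_mul, Matrix.trace_neg, Matrix.trace_mul_comm, star_neg]
    have h2 : (Matrix.trace (Mᴴ * N)).re = 0 := by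
      rw [e1]
      simp [h1]
    have h3 : (Matrix.trace (N * N)).re = 0 := by
      have e2 : N * N = Mᴴ * N - M * N := by rw [hN, Matrix.sub_mul]
      rw [e2, Matrix.trace_sub, Complex.sub_re, h1, h2]
      ring
    have h4 : (Matrix.trace (Nᴴ * N)).re = 0 := by
      rw [hNs, Matrix.neg_mul, Matrix.trace_neg, Complex.neg_re, h3, neg_zero]
    have h5 := eq_zero_of_trace_re N h4
    rw [hN, sub_eq_zero] at h5
    exact h5
  · intro h X hX
    have e1 : star (Matrix.trace (M * X)) = -Matrix.trace (M * X) := by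
      rw [← Matrix.trace_conjTranspose, Matrix.conjTranspose_mul, hX, h, Matrix.neg_mul,
        Matrix.trace_neg, Matrix.trace_mul_comm]
    have e2 := congrArg Complex.re e1
    simp only [Complex.star_def, Complex.conj_re, Complex.neg_re] at e2
    linarith

lemma rep_exists (f : Matrix (Fin d) (Fin d) ℂ →ₗ[ℝ] ℝ) :
    ∃ Z : Matrix (Fin d) (Fin d) ℂ,
      ∀ M : Matrix (Fin d) (Fin d) ℂ, (Matrix.trace (Zᴴ * M)).re = f M := by
  refine ⟨Matrix.of fun k l =>
    Complex.mk (f (Matrix.single k l 1)) (f (Matrix.single k l Complex.I)), ?_⟩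
  intro M
  have hM : M = ∑ k : Fin d, ∑ l : Fin d,
      ((M k l).re • Matrix.single k l 1 + (M k l).im • Matrix.single k l Complex.I) := by
    ext a b
    simp [Matrix.single, ite_and, Matrix.sum_apply]
    rw [Finset.sum_eq_single a, Finset.sum_eq_single b]
    · simp only [Complex.real_smul, if_true, mul_one]
      exact (Complex.re_add_im (M a b)).symm
    · intro c _ hc; simp [hc]
    · simp
    · intro c _ hc; simp [hc]
    · simp
  have hf : f M = ∑ k : Fin d, ∑ l : Fin d,
      ((M k l).re * f (Matrix.single k l 1) + (M k l).im * f (Matrix.single k l Complex.I)) := by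
    conv_lhs => rw [hM]
    rw [map_sum]
    refine Finset.sum_congr rfl fun k _ => ?_
    rw [map_sum]
    refine Finset.sum_congr rfl fun l _ => ?_
    rw [map_add, LinearMap.map_smul, LinearMap.map_smul]
    simp [smul_eq_mul]
  have ht : (Matrix.trace ((Matrix.of fun k l =>
      Complex.mk (f (Matrix.single k l 1)) (f (Matrix.single k l Complex.I)))ᴴ * M)).re
      = ∑ l : Fin d, ∑ k : Fin d,
      ((M k l).re * f (Matrix.single k l 1) + (M k l).im * f (Matrix.single k l Complex.I)) := by
    simp only [Matrix.trace, Matrix.diag, Matrix.mul_apply, Matrix.conjTranspose_apply,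
      Complex.re_sum, Matrix.of_apply]
    refine Finset.sum_congr rfl fun l _ => Finset.sum_congr rfl fun k _ => ?_
    simp only [Complex.mul_re, Complex.star_def, Complex.conj_re, Complex.conj_im]
    ring
  rw [ht, hf, Finset.sum_comm]


/-- The differential of `Π` at `(I,I,I,I)`, i.e. the real-linear map
`(X₁,X₂,Y₁,Y₂) ↦ −X₁A + AY₁ + X₂B − BY₂` on quadruples of skew-adjoint matrices,
is surjective onto `M_d(ℂ)` iff the only `Z` making `A*Z, AZ*, B*Z, BZ*` all
selfadjoint is `Z = 0`. -/
theorem stmt_8 {d : ℕ} (A B : Matrix (Fin d) (Fin d) ℂ) :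
    (∀ M : Matrix (Fin d) (Fin d) ℂ,
      ∃ X1 X2 Y1 Y2 : Matrix (Fin d) (Fin d) ℂ,
        X1ᴴ = -X1 ∧ X2ᴴ = -X2 ∧ Y1ᴴ = -Y1 ∧ Y2ᴴ = -Y2 ∧
        -(X1 * A) + A * Y1 + X2 * B - B * Y2 = M) ↔
      (∀ Z : Matrix (Fin d) (Fin d) ℂ,
        (Aᴴ * Z).IsHermitian → (A * Zᴴ).IsHermitian →
        (Bᴴ * Z).IsHermitian → (B * Zᴴ).IsHermitian → Z = 0) := by
  constructor
  · intro hsurj Z h1 h2 h3 h4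
    obtain ⟨X1, X2, Y1, Y2, hX1, hX2, hY1, hY2, hrep⟩ := hsurj Z
    -- Zᴴ A is Hermitian
    have h1' : (Zᴴ * A)ᴴ = Zᴴ * A := by
      have := h1.eq  -- (Aᴴ * Z)ᴴ = Aᴴ * Z
      rw [Matrix.conjTranspose_mul, Matrix.conjTranspose_conjTranspose] at this
      rw [Matrix.conjTranspose_mul, Matrix.conjTranspose_conjTranspose, ← this]
    have h3' : (Zᴴ * B)ᴴ = Zᴴ * B := by
      have := h3.eq
      rw [Matrix.conjTranspose_mul, Matrix.conjTranspose_conjTranspose] at this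
      rw [Matrix.conjTranspose_mul, Matrix.conjTranspose_conjTranspose, ← this]
    have t1 : (Matrix.trace (Zᴴ * (X1 * A))).re = 0 := by
      have e : Matrix.trace (Zᴴ * (X1 * A)) = Matrix.trace ((A * Zᴴ) * X1) := by
        rw [← Matrix.mul_assoc, Matrix.trace_mul_cycle, Matrix.mul_assoc,
          ← Matrix.mul_assoc]
      rw [e]
      exact (re_trace_skew_iff (A * Zᴴ)).mpr h2.eq X1 hX1
    have t2 : (Matrix.trace (Zᴴ * (A * Y1))).re = 0 := by
      rw [← Matrix.mul_assoc]
      exact (re_trace_skew_iff (Zᴴ * A)).mpr h1' Y1 hY1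
    have t3 : (Matrix.trace (Zᴴ * (X2 * B))).re = 0 := by
      have e : Matrix.trace (Zᴴ * (X2 * B)) = Matrix.trace ((B * Zᴴ) * X2) := by
        rw [← Matrix.mul_assoc, Matrix.trace_mul_cycle, Matrix.mul_assoc,
          ← Matrix.mul_assoc]
      rw [e]
      exact (re_trace_skew_iff (B * Zᴴ)).mpr h4.eq X2 hX2
    have t4 : (Matrix.trace (Zᴴ * (B * Y2))).re = 0 := by
      rw [← Matrix.mul_assoc]
      exact (re_trace_skew_iff (Zᴴ * B)).mpr h3' Y2 hY2
    apply eq_zero_of_trace_re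
    nth_rewrite 2 [← hrep]
    have expand : Zᴴ * (-(X1 * A) + A * Y1 + X2 * B - B * Y2)
        = -(Zᴴ * (X1 * A)) + Zᴴ * (A * Y1) + Zᴴ * (X2 * B) - Zᴴ * (B * Y2) := by
      rw [Matrix.mul_sub, Matrix.mul_add, Matrix.mul_add, Matrix.mul_neg]
    rw [expand, Matrix.trace_sub, Matrix.trace_add, Matrix.trace_add, Matrix.trace_neg]
    simp only [Complex.sub_re, Complex.add_re, Complex.neg_re, t1, t2, t3, t4]
    ring
  · intro hker
    let W : Submodule ℝ (Matrix (Fin d) (Fin d) ℂ) :=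
      { carrier := {M | ∃ X1 X2 Y1 Y2 : Matrix (Fin d) (Fin d) ℂ,
          X1ᴴ = -X1 ∧ X2ᴴ = -X2 ∧ Y1ᴴ = -Y1 ∧ Y2ᴴ = -Y2 ∧
          -(X1 * A) + A * Y1 + X2 * B - B * Y2 = M}
        add_mem' := by
          rintro a b ⟨X1, X2, Y1, Y2, h1, h2, h3, h4, rfl⟩
            ⟨X1', X2', Y1', Y2', h1', h2', h3', h4', rfl⟩
          refine ⟨X1 + X1', X2 + X2', Y1 + Y1', Y2 + Y2', ?_, ?_, ?_, ?_, ?_⟩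
          · rw [Matrix.conjTranspose_add, h1, h1', neg_add]
          · rw [Matrix.conjTranspose_add, h2, h2', neg_add]
          · rw [Matrix.conjTranspose_add, h3, h3', neg_add]
          · rw [Matrix.conjTranspose_add, h4, h4', neg_add]
          · rw [Matrix.add_mul, Matrix.add_mul, Matrix.mul_add, Matrix.mul_add]
            abel
        zero_mem' := ⟨0, 0, 0, 0, by simp, by simp, by simp, by simp, by simp⟩
        smul_mem' := by
          rintro r a ⟨X1, X2, Y1, Y2, h1, h2, h3, h4, rfl⟩
          refine ⟨r • X1, r • X2, r • Y1, r • Y2, ?_, ?_, ?_, ?_, ?_⟩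
          · rw [Matrix.conjTranspose_smul, star_trivial, h1, smul_neg]
          · rw [Matrix.conjTranspose_smul, star_trivial, h2, smul_neg]
          · rw [Matrix.conjTranspose_smul, star_trivial, h3, smul_neg]
          · rw [Matrix.conjTranspose_smul, star_trivial, h4, smul_neg]
          · simp [smul_add, smul_sub, smul_neg, smul_mul_assoc, mul_smul_comm] }
    intro M
    by_contra hM0
    have hM0' : M ∉ W := hM0
    obtain ⟨f, hf0, hfmap⟩ := W.exists_dual_map_eq_bot_of_notMem hM0' inferInstance
    obtain ⟨Z, hZ⟩ := rep_exists f
    have hvanish : ∀ m ∈ W, f m = 0 := by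
      intro m hm
      have : f m ∈ W.map f := Submodule.mem_map_of_mem hm
      rwa [hfmap, Submodule.mem_bot] at this
    -- c2 : A * Zᴴ Hermitian
    have c2 : (A * Zᴴ).IsHermitian := by
      apply (re_trace_skew_iff (A * Zᴴ)).mp
      intro X hX
      have hmem : -(X * A) ∈ W := ⟨X, 0, 0, 0, hX, by simp, by simp, by simp, by simp⟩
      have hv := hvanish _ hmem
      rw [← hZ] at hv
      have e : Matrix.trace (Zᴴ * -(X * A)) = -Matrix.trace ((A * Zᴴ) * X) := by
        rw [Matrix.mul_neg, Matrix.trace_neg, ← Matrix.mul_assoc,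
          Matrix.trace_mul_cycle, Matrix.mul_assoc, ← Matrix.mul_assoc]
      rw [e] at hv
      simpa using hv
    have c4 : (B * Zᴴ).IsHermitian := by
      apply (re_trace_skew_iff (B * Zᴴ)).mp
      intro X hX
      have hmem : X * B ∈ W := ⟨0, X, 0, 0, by simp, hX, by simp, by simp, by simp⟩
      have hv := hvanish _ hmem
      rw [← hZ] at hv
      have e : Matrix.trace (Zᴴ * (X * B)) = Matrix.trace ((B * Zᴴ) * X) := by
        rw [← Matrix.mul_assoc, Matrix.trace_mul_cycle, Matrix.mul_assoc, ← Matrix.mul_assoc]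
      rw [e] at hv
      exact hv
    have c1 : (Aᴴ * Z).IsHermitian := by
      have hZA : (Zᴴ * A)ᴴ = Zᴴ * A := by
        apply (re_trace_skew_iff (Zᴴ * A)).mp
        intro Y hY
        have hmem : A * Y ∈ W := ⟨0, 0, Y, 0, by simp, by simp, hY, by simp, by simp⟩
        have hv := hvanish _ hmem
        rw [← hZ] at hv
        rw [Matrix.mul_assoc]
        exact hv
      rw [Matrix.IsHermitian, Matrix.conjTranspose_mul, Matrix.conjTranspose_conjTranspose]
      rw [Matrix.conjTranspose_mul, Matrix.conjTranspose_conjTranspose] at hZA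
      exact hZA.symm ▸ rfl
    have c3 : (Bᴴ * Z).IsHermitian := by
      have hZB : (Zᴴ * B)ᴴ = Zᴴ * B := by
        apply (re_trace_skew_iff (Zᴴ * B)).mp
        intro Y hY
        have hmem : -(B * Y) ∈ W := ⟨0, 0, 0, Y, by simp, by simp, by simp, hY, by simp⟩
        have hv := hvanish _ hmem
        rw [← hZ] at hv
        have e : Matrix.trace (Zᴴ * -(B * Y)) = -Matrix.trace ((Zᴴ * B) * Y) := by
          rw [Matrix.mul_neg, Matrix.trace_neg, Matrix.mul_assoc]
        rw [e] at hv
        simpa using hv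
      rw [Matrix.IsHermitian, Matrix.conjTranspose_mul, Matrix.conjTranspose_conjTranspose]
      rw [Matrix.conjTranspose_mul, Matrix.conjTranspose_conjTranspose] at hZB
      exact hZB.symm ▸ rfl
    have hZ0 : Z = 0 := hker Z c1 c2 c3 c4
    apply hf0
    rw [← hZ M, hZ0]
    simp

end LocalLidskii
end

section
/- Let A, B ∈ M_d(ℂ) be such that A*B and AB* are selfadjoint. Then there exist unitaries U, V ∈ U(d) and a vector β ∈ ℝ^d such that U* A V = D_{s(A)} and U* B V = D_β, where D_x denotes the diagonal matrix with main diagonal x. -/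
namespace LocalLidskii

open Matrix
open scoped ComplexOrder

lemma multiset_map_univ_eq_ofFn {n : ℕ} {α : Type*} (f : Fin n → α) :
    Multiset.map f Finset.univ.val = ((List.ofFn f : List α) : Multiset α) := by
  rw [List.ofFn_eq_map]
  rfl

lemma sortDesc_eq_of_multiset_eq {n : ℕ} {f g : Fin n → ℝ}
    (h : Multiset.map f Finset.univ.val = Multiset.map g Finset.univ.val) :
    sortDesc f = sortDesc g := by
  have hmid : (List.ofFn f).Perm (List.ofFn g) := by
    rw [← Multiset.coe_eq_coe, ← multiset_map_univ_eq_ofFn, ← multiset_map_univ_eq_ofFn]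
    exact h
  have hp : (List.ofFn (f ∘ Tuple.sort f)).Perm (List.ofFn (g ∘ Tuple.sort g)) :=
    ((Equiv.Perm.ofFn_comp_perm _ f).trans hmid).trans (Equiv.Perm.ofFn_comp_perm _ g).symm
  have hfg : f ∘ Tuple.sort f = g ∘ Tuple.sort g :=
    List.ofFn_injective (List.Perm.eq_of_sortedLE
      ((Tuple.monotone_sort f).sortedLE_ofFn) ((Tuple.monotone_sort g).sortedLE_ofFn) hp)
  funext i
  exact congrFun hfg i.rev

lemma sortDesc_eq_comp_perm {n : ℕ} (f : Fin n → ℝ) :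
    ∃ σ : Equiv.Perm (Fin n), ∀ i, sortDesc f i = f (σ i) :=
  ⟨(Fin.revPerm).trans (Tuple.sort f), fun i => rfl⟩

lemma toEuclideanLin_mul {d : ℕ} (M N : Matrix (Fin d) (Fin d) ℂ)
    (x : EuclideanSpace ℂ (Fin d)) :
    toEuclideanLin (M * N) x = toEuclideanLin M (toEuclideanLin N x) := by
  simp [toEuclideanLin_apply, Matrix.mulVec_mulVec]

lemma charpoly_unitary_conj {n : Type*} [Fintype n] [DecidableEq n]
    {U : Matrix n n ℂ} (hU : U ∈ Matrix.unitaryGroup n ℂ) (D : Matrix n n ℂ) :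
    (U * D * star U).charpoly = D.charpoly := by
  have h1 : U * star U = 1 := Matrix.mem_unitaryGroup_iff.mp hU
  have h2 : star U * U = 1 := Matrix.mem_unitaryGroup_iff'.mp hU
  have key : charmatrix (U * D * star U) =
      (U.map Polynomial.C) * charmatrix D * ((star U).map Polynomial.C) := by
    unfold charmatrix
    rw [Matrix.mul_sub, Matrix.sub_mul]
    congr 1
    · -- U.map C * scalar X * (star U).map C = scalar X
      have : (Matrix.scalar n) Polynomial.X = (Polynomial.X : Polynomial ℂ) • (1 : Matrix n n (Polynomial ℂ)) := by
        simp [Matrix.scalar, Matrix.smul_one_eq_diagonal]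
      rw [this]
      rw [Matrix.mul_smul, Matrix.mul_one, Matrix.smul_mul, ← Matrix.map_mul, h1]
      simp
    · simp [Matrix.map_mul]
  rw [Matrix.charpoly, key, Matrix.det_mul, Matrix.det_mul, Matrix.charpoly]
  have : (U.map Polynomial.C).det * ((star U).map Polynomial.C).det = 1 := by
    rw [← Matrix.det_mul, ← Matrix.map_mul, h1]
    simp
  ring_nf
  calc (U.map Polynomial.C).det * (charmatrix D).det * ((star U).map Polynomial.C).det
      = (charmatrix D).det * ((U.map Polynomial.C).det * ((star U).map Polynomial.C).det) := by ring
    _ = (charmatrix D).det := by rw [this, mul_one]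


section CharpolyAux
open Polynomial


lemma charpoly_diagonal {n : ℕ} (w : Fin n → ℂ) :
    (Matrix.diagonal w).charpoly = ∏ i : Fin n, (X - C (w i)) := by
  rw [Matrix.charpoly_of_upperTriangular _ (Matrix.blockTriangular_diagonal w)]
  simp

lemma roots_charpoly_diagonal {n : ℕ} (w : Fin n → ℂ) :
    (Matrix.diagonal w).charpoly.roots = Multiset.map w Finset.univ.val := by
  rw [charpoly_diagonal, Finset.prod_eq_multiset_prod]
  have : Multiset.map (fun i => X - C (w i)) Finset.univ.val
      = Multiset.map (fun a => X - C a) (Multiset.map w Finset.univ.val) := by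
    rw [Multiset.map_map]; rfl
  rw [this, Polynomial.roots_multiset_prod_X_sub_C]

-- similar diagonal real matrices have same entries multiset
lemma multiset_eq_of_unitary_diag {n : ℕ} {U V : Matrix (Fin n) (Fin n) ℂ}
    (hU : U ∈ Matrix.unitaryGroup (Fin n) ℂ) (hV : V ∈ Matrix.unitaryGroup (Fin n) ℂ)
    {c e : Fin n → ℝ}
    (h : U * Matrix.diagonal (fun i => (c i : ℂ)) * star U
       = V * Matrix.diagonal (fun i => (e i : ℂ)) * star V) :
    Multiset.map c Finset.univ.val = Multiset.map e Finset.univ.val := by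
  have h1 : (U * Matrix.diagonal (fun i => (c i : ℂ)) * star U).charpoly
      = (Matrix.diagonal (fun i => (c i : ℂ))).charpoly := charpoly_unitary_conj hU _
  have h2 : (V * Matrix.diagonal (fun i => (e i : ℂ)) * star V).charpoly
      = (Matrix.diagonal (fun i => (e i : ℂ))).charpoly := charpoly_unitary_conj hV _
  have h3 := h1.symm.trans ((congrArg Matrix.charpoly h).trans h2)
  have h4 := congrArg Polynomial.roots h3
  rw [roots_charpoly_diagonal, roots_charpoly_diagonal] at h4
  apply Multiset.map_injective (f := (Complex.ofReal : ℝ → ℂ)) Complex.ofReal_injective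
  rw [Multiset.map_map, Multiset.map_map]
  exact h4



end CharpolyAux

open Matrix

variable {d : ℕ}

local notation "E" => EuclideanSpace ℂ (Fin d)

noncomputable def matOf (b : Fin d → EuclideanSpace ℂ (Fin d)) : Matrix (Fin d) (Fin d) ℂ :=
  Matrix.of fun i a => b a i

lemma matOf_mem_unitaryGroup (b : OrthonormalBasis (Fin d) ℂ (EuclideanSpace ℂ (Fin d))) :
    matOf ⇑b ∈ Matrix.unitaryGroup (Fin d) ℂ := by
  rw [Matrix.mem_unitaryGroup_iff']
  ext i j
  have horth := orthonormal_iff_ite.mp b.orthonormal (i := i) (j := j)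
  rw [PiLp.inner_apply] at horth
  simp only [RCLike.inner_apply] at horth
  simpa [Matrix.mul_apply, matOf, Matrix.conjTranspose_apply, Matrix.one_apply,
    Matrix.star_apply, mul_comm] using horth

lemma entry_eq_inner (u v : Fin d → EuclideanSpace ℂ (Fin d)) (M : Matrix (Fin d) (Fin d) ℂ)
    (i j : Fin d) :
    ((matOf u)ᴴ * M * matOf v) i j = inner (𝕜 := ℂ) (u i) (Matrix.toEuclideanLin M (v j)) := by
  rw [Matrix.mul_assoc, Matrix.mul_apply, PiLp.inner_apply]
  apply Finset.sum_congr rfl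
  intro l _
  rw [Matrix.conjTranspose_apply, Matrix.mul_apply, RCLike.inner_apply]
  rw [mul_comm]
  congr 1

set_option maxHeartbeats 800000 in
lemma exists_joint_eigenbasis (T : Fin 3 → (EuclideanSpace ℂ (Fin d) →ₗ[ℂ] EuclideanSpace ℂ (Fin d)))
    (hsym : ∀ i, (T i).IsSymmetric)
    (hcomm : Pairwise (Function.onFun Commute T)) :
    ∃ (v : OrthonormalBasis (Fin d) ℂ (EuclideanSpace ℂ (Fin d))) (χ : Fin d → Fin 3 → ℂ),
      ∀ a j, T j (v a) = χ a j • v a := by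
  classical
  set Vfam : (Fin 3 → ℂ) → Submodule ℂ (EuclideanSpace ℂ (Fin d)) :=
    fun χ => ⨅ j, Module.End.eigenspace (T j) (χ j) with hVfam
  have horth := LinearMap.IsSymmetric.orthogonalFamily_iInf_eigenspaces hsym
  have hindep : iSupIndep Vfam := horth.independent
  haveI : Fintype {χ : Fin 3 → ℂ // Vfam χ ≠ ⊥} := hindep.fintypeNeBotOfFiniteDimensional
  have hsup : ⨆ χ : {χ : Fin 3 → ℂ // Vfam χ ≠ ⊥}, Vfam ↑χ = ⊤ := by
    rw [iSup_ne_bot_subtype]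
    exact LinearMap.IsSymmetric.iSup_iInf_eq_top_of_commute hsym hcomm
  have hint : DirectSum.IsInternal (fun χ : {χ : Fin 3 → ℂ // Vfam χ ≠ ⊥} => Vfam ↑χ) :=
    (DirectSum.isInternal_submodule_iff_iSupIndep_and_iSup_eq_top _).mpr
      ⟨hindep.comp Subtype.coe_injective, hsup⟩
  have hd : Module.finrank ℂ (EuclideanSpace ℂ (Fin d)) = d := by
    simp [finrank_euclideanSpace]
  have horth' := horth.comp
    (Subtype.coe_injective : Function.Injective ((↑) : {χ : Fin 3 → ℂ // Vfam χ ≠ ⊥} → (Fin 3 → ℂ)))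
  refine ⟨hint.subordinateOrthonormalBasis hd horth',
    fun a => (hint.subordinateOrthonormalBasisIndex hd a horth').val, ?_⟩
  intro a j
  have hmem := hint.subordinateOrthonormalBasis_subordinate hd a horth'
  have hmem' : hint.subordinateOrthonormalBasis hd horth' a ∈
      Module.End.eigenspace (T j) ((hint.subordinateOrthonormalBasisIndex hd a horth').val j) := by
    exact (Submodule.mem_iInf _).mp hmem j
  exact Module.End.mem_eigenspace_iff.mp hmem'


lemma inner_matrix_eigen {d : ℕ} {M N H : Matrix (Fin d) (Fin d) ℂ} (h : Mᴴ * N = H)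
    {x y : EuclideanSpace ℂ (Fin d)} {c : ℂ}
    (hy : Matrix.toEuclideanLin H y = c • y) :
    inner (𝕜 := ℂ) (Matrix.toEuclideanLin M x) (Matrix.toEuclideanLin N y)
      = c * inner (𝕜 := ℂ) x y := by
  calc inner (𝕜 := ℂ) (Matrix.toEuclideanLin M x) (Matrix.toEuclideanLin N y)
      = inner (𝕜 := ℂ) x (LinearMap.adjoint (Matrix.toEuclideanLin M) (Matrix.toEuclideanLin N y)) :=
        (LinearMap.adjoint_inner_right _ _ _).symm
    _ = inner (𝕜 := ℂ) x (Matrix.toEuclideanLin (Mᴴ * N) y) := by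
        rw [← Matrix.toEuclideanLin_conjTranspose_eq_adjoint]
        rw [toEuclideanLin_mul]
    _ = c * inner (𝕜 := ℂ) x y := by rw [h, hy, inner_smul_right]


set_option maxHeartbeats 1000000 in
lemma main1 {d : ℕ} (A B : Matrix (Fin d) (Fin d) ℂ)
    (h1 : (Aᴴ * B).IsHermitian) (h2 : (A * Bᴴ).IsHermitian) :
    ∃ (v : OrthonormalBasis (Fin d) ℂ (EuclideanSpace ℂ (Fin d))) (p k m : Fin d → ℝ),
      (∀ a, Matrix.toEuclideanLin (Aᴴ*A) (v a) = ((p a : ℝ) : ℂ) • v a) ∧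
      (∀ a, Matrix.toEuclideanLin (Aᴴ*B) (v a) = ((k a : ℝ) : ℂ) • v a) ∧
      (∀ a, Matrix.toEuclideanLin (Bᴴ*B) (v a) = ((m a : ℝ) : ℂ) • v a) ∧
      (∀ a, k a ^ 2 = p a * m a) ∧
      (sortDesc (fun a => Real.sqrt (p a)) = sv A) := by
  classical
  have e1 : Bᴴ * A = Aᴴ * B := by
    have h1' := h1.eq
    rwa [Matrix.conjTranspose_mul, Matrix.conjTranspose_conjTranspose] at h1'
  have e2 : B * Aᴴ = A * Bᴴ := by
    have h2' := h2.eq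
    rwa [Matrix.conjTranspose_mul, Matrix.conjTranspose_conjTranspose] at h2'
  have c1 : (Aᴴ*A) * (Aᴴ*B) = (Aᴴ*B) * (Aᴴ*A) := by
    calc (Aᴴ*A) * (Aᴴ*B) = Aᴴ * (A * (Aᴴ * B)) := by simp only [Matrix.mul_assoc]
      _ = Aᴴ * (A * (Bᴴ * A)) := by rw [e1]
      _ = Aᴴ * ((A * Bᴴ) * A) := by simp only [Matrix.mul_assoc]
      _ = Aᴴ * ((B * Aᴴ) * A) := by rw [e2]
      _ = (Aᴴ*B) * (Aᴴ*A) := by simp only [Matrix.mul_assoc]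
  have c2a : (Aᴴ*A) * (Bᴴ*B) = (Aᴴ*B) * (Aᴴ*B) := by
    calc (Aᴴ*A) * (Bᴴ*B) = Aᴴ * ((A * Bᴴ) * B) := by simp only [Matrix.mul_assoc]
      _ = Aᴴ * ((B * Aᴴ) * B) := by rw [e2]
      _ = (Aᴴ*B) * (Aᴴ*B) := by simp only [Matrix.mul_assoc]
  have c2b : (Bᴴ*B) * (Aᴴ*A) = (Aᴴ*B) * (Aᴴ*B) := by
    calc (Bᴴ*B) * (Aᴴ*A) = Bᴴ * ((B * Aᴴ) * A) := by simp only [Matrix.mul_assoc]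
      _ = Bᴴ * ((A * Bᴴ) * A) := by rw [e2]
      _ = (Bᴴ*A) * (Bᴴ*A) := by simp only [Matrix.mul_assoc]
      _ = (Aᴴ*B) * (Aᴴ*B) := by rw [e1]
  have c3 : (Bᴴ*B) * (Aᴴ*B) = (Aᴴ*B) * (Bᴴ*B) := by
    calc (Bᴴ*B) * (Aᴴ*B) = Bᴴ * ((B * Aᴴ) * B) := by simp only [Matrix.mul_assoc]
      _ = Bᴴ * ((A * Bᴴ) * B) := by rw [e2]
      _ = (Bᴴ*A) * (Bᴴ*B) := by simp only [Matrix.mul_assoc]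
      _ = (Aᴴ*B) * (Bᴴ*B) := by rw [e1]
  have hsym : ∀ i, ((![Matrix.toEuclideanLin (Aᴴ*A), Matrix.toEuclideanLin (Aᴴ*B),
      Matrix.toEuclideanLin (Bᴴ*B)] : Fin 3 → _) i).IsSymmetric := by
    intro i
    fin_cases i
    · exact Matrix.isHermitian_iff_isSymmetric.mp (Matrix.isHermitian_conjTranspose_mul_self A)
    · exact Matrix.isHermitian_iff_isSymmetric.mp h1
    · exact Matrix.isHermitian_iff_isSymmetric.mp (Matrix.isHermitian_conjTranspose_mul_self B)
  have hcommMat : ∀ (M N : Matrix (Fin d) (Fin d) ℂ), M * N = N * M →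
      Commute (Matrix.toEuclideanLin M) (Matrix.toEuclideanLin N) := by
    intro M N h
    show _ * _ = _ * _
    ext x
    simp only [Module.End.mul_apply]
    rw [← toEuclideanLin_mul, ← toEuclideanLin_mul, h]
  have hcomm : Pairwise (Function.onFun Commute (![Matrix.toEuclideanLin (Aᴴ*A),
      Matrix.toEuclideanLin (Aᴴ*B), Matrix.toEuclideanLin (Bᴴ*B)] : Fin 3 → _)) := by
    intro i j hij
    fin_cases i <;> fin_cases j <;>
      first
        | exact absurd rfl hij
        | (apply hcommMat
           first
             | exact c1 | exact c1.symm
             | exact c2a.trans c2b.symm | exact c2b.trans c2a.symm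
             | exact c3 | exact c3.symm)
  obtain ⟨v, χ, hv⟩ := exists_joint_eigenbasis _ hsym hcomm
  have hvne : ∀ a, v a ≠ 0 := fun a => by simpa using v.toBasis.ne_zero a
  have hreal : ∀ a j, χ a j = ((χ a j).re : ℂ) := by
    intro a j
    have hev := Module.End.hasEigenvalue_of_hasEigenvector
      (⟨Module.End.mem_eigenspace_iff.mpr (hv a j), hvne a⟩ :
        Module.End.HasEigenvector _ (χ a j) (v a))
    have := (hsym j).conj_eigenvalue_eq_self hev
    exact (Complex.conj_eq_iff_re.mp this).symm
  set p : Fin d → ℝ := fun a => (χ a 0).re with hpdef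
  set k : Fin d → ℝ := fun a => (χ a 1).re with hkdef
  set m : Fin d → ℝ := fun a => (χ a 2).re with hmdef
  have hp : ∀ a, Matrix.toEuclideanLin (Aᴴ*A) (v a) = ((p a : ℝ) : ℂ) • v a := by
    intro a
    have h' := hv a 0
    rw [hreal a 0] at h'
    exact h'
  have hk : ∀ a, Matrix.toEuclideanLin (Aᴴ*B) (v a) = ((k a : ℝ) : ℂ) • v a := by
    intro a
    have h' := hv a 1
    rw [hreal a 1] at h'
    exact h'
  have hm : ∀ a, Matrix.toEuclideanLin (Bᴴ*B) (v a) = ((m a : ℝ) : ℂ) • v a := by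
    intro a
    have h' := hv a 2
    rw [hreal a 2] at h'
    exact h'
  have hkpm : ∀ a, k a ^ 2 = p a * m a := by
    intro a
    have hA' : Matrix.toEuclideanLin ((Aᴴ*B) * (Aᴴ*B)) (v a)
        = (((k a : ℝ):ℂ) * ((k a : ℝ):ℂ)) • v a := by
      rw [toEuclideanLin_mul, hk a, LinearMap.map_smul, hk a, smul_smul]
    have hB' : Matrix.toEuclideanLin ((Aᴴ*A) * (Bᴴ*B)) (v a)
        = (((p a : ℝ):ℂ) * ((m a : ℝ):ℂ)) • v a := by
      rw [toEuclideanLin_mul, hm a, LinearMap.map_smul, hp a, smul_smul, mul_comm]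
    rw [c2a] at hB'
    have heq : (((k a : ℝ):ℂ) * ((k a : ℝ):ℂ)) = (((p a : ℝ):ℂ) * ((m a : ℝ):ℂ)) :=
      smul_left_injective ℂ (hvne a) (hA'.symm.trans hB')
    have : (k a * k a : ℝ) = (p a * m a : ℝ) := by exact_mod_cast heq
    nlinarith [this]
  have hH := Matrix.isHermitian_conjTranspose_mul_self A
  have hHV : (Aᴴ*A) * matOf ⇑v = matOf ⇑v * Matrix.diagonal (fun a => ((p a : ℝ):ℂ)) := by
    ext i j
    have hco : ((Aᴴ*A) *ᵥ ⇑(v j)) i = ((p j : ℝ) : ℂ) * (v j i) :=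
      congrArg (fun z => z i) (hp j)
    calc ((Aᴴ*A) * matOf ⇑v) i j = ((Aᴴ*A) *ᵥ ⇑(v j)) i := by
          simp [Matrix.mul_apply, Matrix.mulVec, dotProduct, matOf]
      _ = ((p j : ℝ) : ℂ) * (v j i) := hco
      _ = (matOf ⇑v * Matrix.diagonal (fun a => ((p a : ℝ):ℂ))) i j := by
          simp [Matrix.mul_apply, Matrix.diagonal_apply, matOf]
          ring
  have hUnit := matOf_mem_unitaryGroup v
  have hVV : matOf ⇑v * (matOf ⇑v)ᴴ = 1 := by
    have := Matrix.mem_unitaryGroup_iff.mp hUnit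
    exact this
  have hHeq : Aᴴ*A = matOf ⇑v * Matrix.diagonal (fun a => ((p a : ℝ):ℂ)) * (matOf ⇑v)ᴴ := by
    calc Aᴴ*A = (Aᴴ*A) * (matOf ⇑v * (matOf ⇑v)ᴴ) := by rw [hVV, Matrix.mul_one]
      _ = ((Aᴴ*A) * matOf ⇑v) * (matOf ⇑v)ᴴ := by simp only [Matrix.mul_assoc]
      _ = _ := by rw [hHV]
  have hms : Multiset.map p Finset.univ.val = Multiset.map hH.eigenvalues Finset.univ.val := by
    apply multiset_eq_of_unitary_diag hUnit hH.eigenvectorUnitary.2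
    exact hHeq.symm.trans hH.spectral_theorem
  have hsort : sortDesc (fun a => Real.sqrt (p a)) = sv A := by
    apply sortDesc_eq_of_multiset_eq
    have := congrArg (Multiset.map Real.sqrt) hms
    simpa [Multiset.map_map, Function.comp_def] using this
  exact ⟨v, p, k, m, hp, hk, hm, hkpm, hsort⟩
set_option maxHeartbeats 2000000 in
lemma main2 {d : ℕ} (A B : Matrix (Fin d) (Fin d) ℂ)
    (h1 : (Aᴴ * B).IsHermitian)
    (v : OrthonormalBasis (Fin d) ℂ (EuclideanSpace ℂ (Fin d))) (p k m : Fin d → ℝ)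
    (hp : ∀ a, Matrix.toEuclideanLin (Aᴴ*A) (v a) = ((p a : ℝ) : ℂ) • v a)
    (hk : ∀ a, Matrix.toEuclideanLin (Aᴴ*B) (v a) = ((k a : ℝ) : ℂ) • v a)
    (hm : ∀ a, Matrix.toEuclideanLin (Bᴴ*B) (v a) = ((m a : ℝ) : ℂ) • v a)
    (hkpm : ∀ a, k a ^ 2 = p a * m a)
    (hsv : sortDesc (fun a => Real.sqrt (p a)) = sv A) :
    ∃ U V : Matrix (Fin d) (Fin d) ℂ,
      U ∈ Matrix.unitaryGroup (Fin d) ℂ ∧ V ∈ Matrix.unitaryGroup (Fin d) ℂ ∧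
      ∃ β : Fin d → ℝ,
        Uᴴ * A * V = Matrix.diagonal (fun i => (sv A i : ℂ)) ∧
        Uᴴ * B * V = Matrix.diagonal (fun i => (β i : ℂ)) := by
  classical
  have e1 : Bᴴ * A = Aᴴ * B := by
    have h1' := h1.eq
    rwa [Matrix.conjTranspose_mul, Matrix.conjTranspose_conjTranspose] at h1'
  set aV : Fin d → EuclideanSpace ℂ (Fin d) := fun j => Matrix.toEuclideanLin A (v j) with haV
  set bV : Fin d → EuclideanSpace ℂ (Fin d) := fun j => Matrix.toEuclideanLin B (v j) with hbV
  have hortho := orthonormal_iff_ite.mp v.orthonormal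
  have f1 : ∀ i j, inner (𝕜 := ℂ) (aV i) (aV j) = if i = j then ((p j : ℝ) : ℂ) else 0 := by
    intro i j
    rw [haV]
    rw [inner_matrix_eigen rfl (hp j), hortho i j]
    simp
  have f2 : ∀ i j, inner (𝕜 := ℂ) (aV i) (bV j) = if i = j then ((k j : ℝ) : ℂ) else 0 := by
    intro i j
    rw [haV, hbV]
    rw [inner_matrix_eigen rfl (hk j), hortho i j]
    simp
  have f3 : ∀ i j, inner (𝕜 := ℂ) (bV i) (bV j) = if i = j then ((m j : ℝ) : ℂ) else 0 := by
    intro i j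
    rw [hbV]
    rw [inner_matrix_eigen rfl (hm j), hortho i j]
    simp
  have f4 : ∀ i j, inner (𝕜 := ℂ) (bV i) (aV j) = if i = j then ((k j : ℝ) : ℂ) else 0 := by
    intro i j
    rw [haV, hbV]
    rw [inner_matrix_eigen e1 (hk j), hortho i j]
    simp
  have hpnn : ∀ j, 0 ≤ p j := by
    intro j
    have h := f1 j j
    simp only [if_pos rfl] at h
    have hnn := inner_self_nonneg (𝕜 := ℂ) (x := aV j)
    rw [h] at hnn
    simpa using hnn
  have hmnn : ∀ j, 0 ≤ m j := by
    intro j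
    have h := f3 j j
    simp only [if_pos rfl] at h
    have hnn := inner_self_nonneg (𝕜 := ℂ) (x := bV j)
    rw [h] at hnn
    simpa using hnn
  have haz : ∀ j, p j = 0 → aV j = 0 := by
    intro j hj
    have h := f1 j j
    simp only [if_pos rfl, hj] at h
    rw [show ((0:ℝ):ℂ) = 0 by norm_num] at h
    exact inner_self_eq_zero.mp h
  have hbz : ∀ j, m j = 0 → bV j = 0 := by
    intro j hj
    have h := f3 j j
    simp only [if_pos rfl, hj] at h
    rw [show ((0:ℝ):ℂ) = 0 by norm_num] at h
    exact inner_self_eq_zero.mp h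
  set ca : Fin d → ℝ := fun j => if p j ≠ 0 then (Real.sqrt (p j))⁻¹ else 0 with hca
  set cb : Fin d → ℝ := fun j => if p j ≠ 0 then 0 else if m j ≠ 0 then (Real.sqrt (m j))⁻¹ else 0
    with hcb
  set u₀ : Fin d → EuclideanSpace ℂ (Fin d) :=
    fun j => ((ca j : ℝ) : ℂ) • aV j + ((cb j : ℝ) : ℂ) • bV j with hu₀
  have hinner : ∀ i j, inner (𝕜 := ℂ) (u₀ i) (u₀ j) = if i = j
      then ((ca i * ca j * p j + ca i * cb j * k j + cb i * ca j * k j + cb i * cb j * m j : ℝ) : ℂ)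
      else 0 := by
    intro i j
    by_cases hij : i = j
    · subst hij
      simp only [hu₀, inner_add_left, inner_add_right, inner_smul_left, inner_smul_right,
        f1, f2, f3, f4, Complex.conj_ofReal, if_pos rfl]
      push_cast
      ring
    · simp only [hu₀, inner_add_left, inner_add_right, inner_smul_left, inner_smul_right,
        f1, f2, f3, f4, Complex.conj_ofReal, hij, if_false, mul_zero, add_zero, zero_add]
  set s : Set (Fin d) := {j | p j ≠ 0 ∨ m j ≠ 0} with hs
  have hdiag1 : ∀ j ∈ s, (ca j * ca j * p j + ca j * cb j * k j
      + cb j * ca j * k j + cb j * cb j * m j : ℝ) = 1 := by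
    intro j hj
    by_cases hpj : p j = 0
    · have hmj : m j ≠ 0 := by
        rcases hj with h | h
        · exact absurd hpj h
        · exact h
      have hmm : Real.sqrt (m j) * Real.sqrt (m j) = m j := Real.mul_self_sqrt (hmnn j)
      simp only [hca, hcb, hpj, ne_eq, not_true_eq_false, if_false, not_false_eq_true, if_true,
        hmj]
      calc (0 * 0 * 0 + 0 * (Real.sqrt (m j))⁻¹ * k j + (Real.sqrt (m j))⁻¹ * 0 * k j
          + (Real.sqrt (m j))⁻¹ * (Real.sqrt (m j))⁻¹ * m j : ℝ)
          = (Real.sqrt (m j) * Real.sqrt (m j))⁻¹ * m j := by rw [mul_inv]; ring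
        _ = (m j)⁻¹ * m j := by rw [hmm]
        _ = 1 := inv_mul_cancel₀ hmj
    · have hpp : Real.sqrt (p j) * Real.sqrt (p j) = p j := Real.mul_self_sqrt (hpnn j)
      simp only [hca, hcb, hpj, ne_eq, not_false_eq_true, if_true, not_true_eq_false, if_false]
      calc ((Real.sqrt (p j))⁻¹ * (Real.sqrt (p j))⁻¹ * p j + (Real.sqrt (p j))⁻¹ * 0 * k j
          + 0 * (Real.sqrt (p j))⁻¹ * k j + 0 * 0 * m j : ℝ)
          = (Real.sqrt (p j) * Real.sqrt (p j))⁻¹ * p j := by rw [mul_inv]; ring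
        _ = (p j)⁻¹ * p j := by rw [hpp]
        _ = 1 := inv_mul_cancel₀ hpj
  have hON : Orthonormal ℂ (s.restrict u₀) := by
    rw [orthonormal_iff_ite]
    rintro ⟨i, hi⟩ ⟨j, hj⟩
    rw [show s.restrict u₀ ⟨i, hi⟩ = u₀ i from rfl, show s.restrict u₀ ⟨j, hj⟩ = u₀ j from rfl, hinner i j]
    by_cases hij : i = j
    · subst hij
      simp [hdiag1 i hi]
    · have : (⟨i, hi⟩ : s) ≠ ⟨j, hj⟩ := by simpa [Subtype.mk_eq_mk] using hij
      simp [hij, this]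
  have hcard : Module.finrank ℂ (EuclideanSpace ℂ (Fin d)) = Fintype.card (Fin d) := by simp
  obtain ⟨u, hu⟩ := hON.exists_orthonormalBasis_extension_of_card_eq hcard
  have hAv : ∀ j, aV j = ((Real.sqrt (p j) : ℝ) : ℂ) • u j := by
    intro j
    by_cases hpj : p j = 0
    · simp [haz j hpj, hpj]
    · have hsne : Real.sqrt (p j) ≠ 0 :=
        Real.sqrt_ne_zero'.mpr (lt_of_le_of_ne (hpnn j) (Ne.symm hpj))
      have hj : j ∈ s := Or.inl hpj
      rw [hu j hj, hu₀]
      simp only [hca, hcb, hpj, ne_eq, not_false_eq_true, if_true, not_true_eq_false, if_false]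
      rw [Complex.ofReal_zero, zero_smul, add_zero, smul_smul, ← Complex.ofReal_mul,
        mul_inv_cancel₀ hsne, Complex.ofReal_one, one_smul]
  set β : Fin d → ℝ := fun j => if p j ≠ 0 then k j / Real.sqrt (p j)
    else if m j ≠ 0 then Real.sqrt (m j) else 0 with hβ
  have hBv : ∀ j, bV j = ((β j : ℝ) : ℂ) • u j := by
    intro j
    by_cases hpj : p j = 0
    · by_cases hmj : m j = 0
      · simp [hbz j hmj, hβ, hpj, hmj]
      · have hsne : Real.sqrt (m j) ≠ 0 :=
          Real.sqrt_ne_zero'.mpr (lt_of_le_of_ne (hmnn j) (Ne.symm hmj))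
        have hj : j ∈ s := Or.inr hmj
        rw [hu j hj, hu₀, hβ]
        simp only [hca, hcb, hpj, ne_eq, not_true_eq_false, if_false, not_false_eq_true, if_true,
          hmj]
        rw [Complex.ofReal_zero, zero_smul, zero_add, smul_smul, ← Complex.ofReal_mul,
          mul_inv_cancel₀ hsne, Complex.ofReal_one, one_smul]
    · have hsne : Real.sqrt (p j) ≠ 0 :=
        Real.sqrt_ne_zero'.mpr (lt_of_le_of_ne (hpnn j) (Ne.symm hpj))
      have hpp : Real.sqrt (p j) * Real.sqrt (p j) = p j := Real.mul_self_sqrt (hpnn j)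
      have hc : (k j / p j) * k j = m j := by
        have := hkpm j
        field_simp
        nlinarith [this]
      have hkey : bV j = ((k j / p j : ℝ) : ℂ) • aV j := by
        have hz : inner (𝕜 := ℂ) (bV j - ((k j / p j : ℝ) : ℂ) • aV j)
            (bV j - ((k j / p j : ℝ) : ℂ) • aV j) = 0 := by
          rw [inner_sub_left, inner_sub_right, inner_sub_right, inner_smul_left,
            inner_smul_right, inner_smul_left, inner_smul_right, f1 j j, f3 j j, f2 j j, f4 j j]
          simp only [if_pos rfl, Complex.conj_ofReal, eq_self_iff_true, if_true, ite_true]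
          have hC2 : ((k j / p j : ℝ) : ℂ) * ((p j : ℝ) : ℂ) = ((k j : ℝ) : ℂ) := by
            rw [← Complex.ofReal_mul, div_mul_cancel₀ _ hpj]
          have hC1 : ((k j / p j : ℝ) : ℂ) * ((k j : ℝ) : ℂ) = ((m j : ℝ) : ℂ) := by
            rw [← Complex.ofReal_mul, hc]
          rw [hC2, hC1]
          ring
        have hsub := inner_self_eq_zero.mp hz
        have := sub_eq_zero.mp hsub
        exact this
      rw [hkey, hAv j, smul_smul, hβ]
      simp only [hpj, ne_eq, not_false_eq_true, if_true]
      congr 1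
      rw [← Complex.ofReal_mul]
      congr 1
      rw [div_mul_eq_mul_div, ← hpp]
      field_simp
      rw [Real.sqrt_sq (Real.sqrt_nonneg _)]
  obtain ⟨σ, hσ⟩ := sortDesc_eq_comp_perm (fun a => Real.sqrt (p a))
  have hsv' : ∀ i, sv A i = Real.sqrt (p (σ i)) := by
    intro i
    rw [← hsv]
    exact hσ i
  set u' := u.reindex σ.symm with hu'
  set v' := v.reindex σ.symm with hv'
  have huv : ∀ i, u' i = u (σ i) := by
    intro i
    simp [hu', OrthonormalBasis.reindex_apply]
  have hvv : ∀ i, v' i = v (σ i) := by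
    intro i
    simp [hv', OrthonormalBasis.reindex_apply]
  have huorth := orthonormal_iff_ite.mp u.orthonormal
  refine ⟨matOf ⇑u', matOf ⇑v', matOf_mem_unitaryGroup u', matOf_mem_unitaryGroup v',
    fun j => β (σ j), ?_, ?_⟩
  · ext i j
    rw [entry_eq_inner]
    rw [hvv j, huv i]
    rw [show Matrix.toEuclideanLin A (v (σ j)) = aV (σ j) from rfl]
    rw [hAv (σ j), inner_smul_right, huorth (σ i) (σ j)]
    by_cases hij : i = j
    · subst hij
      simp [Matrix.diagonal_apply, hsv' i]
    · have hne : σ i ≠ σ j := fun hcon => hij (σ.injective hcon)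
      simp [Matrix.diagonal_apply, hij, hne]
  · ext i j
    rw [entry_eq_inner]
    rw [hvv j, huv i]
    rw [show Matrix.toEuclideanLin B (v (σ j)) = bV (σ j) from rfl]
    rw [hBv (σ j), inner_smul_right, huorth (σ i) (σ j)]
    by_cases hij : i = j
    · subst hij
      simp [Matrix.diagonal_apply]
    · have hne : σ i ≠ σ j := fun hcon => hij (σ.injective hcon)
      simp [Matrix.diagonal_apply, hij, hne]

/-- (Eckart–Young) If `A*B` and `AB*` are selfadjoint then `A` and `B` admit a
simultaneous reduction: `U* A V = D_{s(A)}` and `U* B V = D_β` with `β ∈ ℝ^d`. -/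
theorem stmt_10 {d : ℕ} (A B : Matrix (Fin d) (Fin d) ℂ)
    (h1 : (Aᴴ * B).IsHermitian) (h2 : (A * Bᴴ).IsHermitian) :
    ∃ U V : Matrix (Fin d) (Fin d) ℂ,
      U ∈ Matrix.unitaryGroup (Fin d) ℂ ∧ V ∈ Matrix.unitaryGroup (Fin d) ℂ ∧
      ∃ β : Fin d → ℝ,
        Uᴴ * A * V = Matrix.diagonal (fun i => (sv A i : ℂ)) ∧
        Uᴴ * B * V = Matrix.diagonal (fun i => (β i : ℂ)) := by
  obtain ⟨v, p, k, m, hp, hk, hm, hkpm, hsv⟩ := main1 A B h1 h2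
  exact main2 A B h1 v p k m hp hk hm hkpm hsv

end LocalLidskii
end

section
/- Let N be a strictly convex unitarily invariant norm on M_d(ℂ) and let A, B ∈ M_d(ℂ) be such that s(A) is submajorized by s(B) (s(A) ≺_w s(B)) and N(A) = N(B). Then s(A) = s(B). -/
namespace LocalLidskii

open Matrix
open scoped ComplexOrder

section Aux

variable {d : ℕ} {N : Matrix (Fin d) (Fin d) ℂ → ℝ}

lemma N_zero (hN : IsUINorm d N) : N 0 = 0 := by
  have := hN.smul_eq 0 0
  simpa using this

lemma N_comb_le (hN : IsUINorm d N) {a b : ℝ} (ha : 0 ≤ a) (hb : 0 ≤ b)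
    (C D : Matrix (Fin d) (Fin d) ℂ) :
    N ((a : ℂ) • C + (b : ℂ) • D) ≤ a * N C + b * N D := by
  have h1 := hN.add_le ((a : ℂ) • C) ((b : ℂ) • D)
  have h2 := hN.smul_eq (a : ℂ) C
  have h3 := hN.smul_eq (b : ℂ) D
  rw [h2, h3] at h1
  simpa [Complex.norm_real, abs_of_nonneg, ha, hb] using h1

lemma collapse (hN : IsUINorm d N) (hNsc : IsStrictlyConvexNorm d N)
    {t c : ℝ} (ht0 : 0 < t) (ht : t ≤ 1/2)
    {C D : Matrix (Fin d) (Fin d) ℂ} (hC : N C = c) (hD : N D = c)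
    (h : N ((t : ℂ) • C + ((1 - t : ℝ) : ℂ) • D) = c) : C = D := by
  set w : Matrix (Fin d) (Fin d) ℂ := ((2*t : ℝ) : ℂ) • C + ((1 - 2*t : ℝ) : ℂ) • D with hw
  have hwle : N w ≤ c := by
    have := N_comb_le hN (a := 2*t) (b := 1 - 2*t) (by linarith) (by linarith) C D
    rw [hC, hD] at this
    calc N w ≤ 2*t*c + (1-2*t)*c := this
    _ = c := by ring
  have hmid : (2 : ℂ)⁻¹ • (D + w) = (t : ℂ) • C + ((1 - t : ℝ) : ℂ) • D := by
    rw [hw]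
    push_cast
    module
  have hwge : c ≤ N w := by
    have h1 := N_comb_le hN (a := 1/2) (b := 1/2) (by norm_num) (by norm_num) D w
    have h2 : ((1/2 : ℝ) : ℂ) • D + ((1/2 : ℝ) : ℂ) • w = (t : ℂ) • C + ((1 - t : ℝ) : ℂ) • D := by
      rw [← hmid]; push_cast; module
    rw [h2, h, hD] at h1
    linarith
  have hweq : N w = c := le_antisymm hwle hwge
  have hDw : D = w := by
    apply hNsc D w (by rw [hD, hweq])
    rw [hmid, h, hD]
  have : ((2*t : ℝ) : ℂ) • C = ((2*t : ℝ) : ℂ) • D := by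
    have h2 : ((2*t:ℝ):ℂ) • D + ((1 - 2*t : ℝ) : ℂ) • D = D := by push_cast; module
    rw [hw] at hDw
    nth_rewrite 1 [← h2] at hDw
    exact (add_right_cancel hDw.symm)
  have h2t : ((2*t:ℝ):ℂ) ≠ 0 := by
    simp only [ne_eq, Complex.ofReal_eq_zero]
    linarith
  exact smul_right_injective _ h2t this


/-- permutation matrix of σ -/
noncomputable def pmat (σ : Equiv.Perm (Fin d)) : Matrix (Fin d) (Fin d) ℂ :=
  σ.toPEquiv.toMatrix

lemma pmat_star (σ : Equiv.Perm (Fin d)) : star (pmat σ) = pmat σ⁻¹ := by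
  ext i j
  simp only [pmat, Matrix.star_apply, PEquiv.toMatrix_apply, Equiv.toPEquiv_apply,
    Option.mem_def, Option.some_inj]
  by_cases h : σ⁻¹ i = j
  · have h2 : σ j = i := by simp [← h]
    simp [h, h2]
  · have h2 : ¬ σ j = i := fun hh => h (by simp [← hh])
    simp [h, h2]
    exact h

lemma pmat_mul_pmat (σ τ : Equiv.Perm (Fin d)) : pmat σ * pmat τ = pmat (τ * σ) := by
  simp only [pmat]
  rw [PEquiv.toMatrix_toPEquiv_mul]
  ext i j
  simp [PEquiv.toMatrix_apply, Equiv.toPEquiv_apply]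

lemma pmat_unitary (σ : Equiv.Perm (Fin d)) : pmat σ ∈ Matrix.unitaryGroup (Fin d) ℂ := by
  rw [Matrix.mem_unitaryGroup_iff']
  rw [pmat_star, pmat_mul_pmat]
  simp only [mul_inv_cancel]
  ext i j
  simp [pmat, PEquiv.toMatrix_apply, Equiv.toPEquiv_apply, Matrix.one_apply, eq_comm]

lemma pmat_conj_diagonal (σ : Equiv.Perm (Fin d)) (w : Fin d → ℂ) :
    pmat σ * Matrix.diagonal w * star (pmat σ) = Matrix.diagonal (w ∘ σ) := by
  rw [pmat_star]
  simp only [pmat]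
  rw [PEquiv.toMatrix_toPEquiv_mul, PEquiv.mul_toMatrix_toPEquiv]
  ext i j
  simp only [Matrix.submatrix_apply, Matrix.diagonal_apply, Equiv.symm_apply_apply, id_eq,
    Function.comp_apply, Equiv.Perm.inv_def]
  by_cases h : i = j
  · subst h; simp
  · have h2 : ¬ (σ i = (Equiv.symm σ).symm j) := by simpa using h
    simp [h, h2]


/-- the induced vector norm -/
noncomputable def nu (N : Matrix (Fin d) (Fin d) ℂ → ℝ) (z : Fin d → ℝ) : ℝ :=
  N (Matrix.diagonal (fun i => (z i : ℂ)))

lemma nu_perm (hN : IsUINorm d N) (z : Fin d → ℝ) (σ : Equiv.Perm (Fin d)) :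
    nu N (z ∘ σ) = nu N z := by
  have h1 : Matrix.diagonal (fun i => ((z ∘ σ) i : ℂ))
      = pmat σ * Matrix.diagonal (fun i => (z i : ℂ)) * star (pmat σ) := by
    rw [pmat_conj_diagonal]; rfl
  rw [nu, h1, pmat_star]
  exact hN.unitary_invariant _ _ _ (pmat_unitary σ) (pmat_unitary σ⁻¹)

lemma nu_flip (hN : IsUINorm d N) (z : Fin d → ℝ) (k : Fin d) :
    nu N (fun i => if i = k then -z i else z i) = nu N z := by
  set E : Matrix (Fin d) (Fin d) ℂ :=
    Matrix.diagonal (fun i => if i = k then (-1 : ℂ) else 1) with hE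
  have hEu : E ∈ Matrix.unitaryGroup (Fin d) ℂ := by
    rw [Matrix.mem_unitaryGroup_iff]
    rw [hE, Matrix.star_eq_conjTranspose, Matrix.diagonal_conjTranspose,
      Matrix.diagonal_mul_diagonal]
    have hfun : (fun i => (if i = k then (-1:ℂ) else 1) *
        star (fun i => if i = k then (-1:ℂ) else 1) i) = fun _ => (1:ℂ) := by
      funext i
      by_cases h : i = k <;> simp [h]
    rw [hfun, Matrix.diagonal_one]
  have h1 : E * Matrix.diagonal (fun i => (z i : ℂ)) * 1
      = Matrix.diagonal (fun i => (((if i = k then -z i else z i) : ℝ) : ℂ)) := by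
    rw [mul_one, hE, Matrix.diagonal_mul_diagonal]
    have hfun : (fun i => (if i = k then (-1:ℂ) else 1) * (z i : ℂ))
        = fun i => (((if i = k then -z i else z i) : ℝ) : ℂ) := by
      funext i
      by_cases h : i = k <;> simp [h]
    rw [hfun]
  have := hN.unitary_invariant (Matrix.diagonal (fun i => (z i : ℂ))) E 1 hEu
    (by simp [Matrix.mem_unitaryGroup_iff])
  rw [h1] at this
  exact this

/-- scaling one coordinate down in absolute value -/
lemma step_flip (hN : IsUINorm d N) (hNsc : IsStrictlyConvexNorm d N)
    (y : Fin d → ℝ) (k : Fin d) {s : ℝ} (hs0 : 0 ≤ s) (hs1 : s < 1) :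
    nu N (Function.update y k (s * y k)) ≤ nu N y ∧
      (nu N (Function.update y k (s * y k)) = nu N y → y k = 0) := by
  set D : Matrix (Fin d) (Fin d) ℂ := Matrix.diagonal (fun i => (y i : ℂ)) with hD
  set F : Matrix (Fin d) (Fin d) ℂ :=
    Matrix.diagonal (fun i => (((if i = k then -y i else y i) : ℝ) : ℂ)) with hF
  have hNF : N F = N D := nu_flip hN y k
  obtain ⟨t, htdef⟩ : ∃ t : ℝ, t = (1 - s)/2 := ⟨_, rfl⟩
  have ht0 : 0 < t := by rw [htdef]; linarith
  have ht2 : t ≤ 1/2 := by rw [htdef]; linarith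
  have hcomb : Matrix.diagonal (fun i => ((Function.update y k (s * y k)) i : ℂ))
      = (t : ℂ) • F + ((1 - t : ℝ) : ℂ) • D := by
    ext i j
    by_cases h : i = j
    · subst h
      by_cases hk : i = k
      · subst hk
        simp only [Matrix.add_apply, Matrix.smul_apply, hF, hD, Matrix.diagonal_apply_eq,
          Function.update_self, smul_eq_mul, if_pos rfl]
        rw [htdef]
        push_cast
        ring
      · simp only [Matrix.add_apply, Matrix.smul_apply, hF, hD, Matrix.diagonal_apply_eq,
          Function.update_of_ne hk, smul_eq_mul, if_neg hk]
        rw [htdef]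
        push_cast
        ring
    · simp [Matrix.diagonal_apply_ne _ h, hF, hD, h]
  have hle : nu N (Function.update y k (s * y k)) ≤ nu N y := by
    rw [nu, hcomb]
    calc N ((t : ℂ) • F + ((1 - t : ℝ) : ℂ) • D) ≤ t * N F + (1-t) * N D :=
        N_comb_le hN (le_of_lt ht0) (by linarith) F D
    _ = nu N y := by rw [hNF]; rw [nu, ← hD]; ring
  refine ⟨hle, fun heq => ?_⟩
  have hFD : F = D := by
    apply collapse hN hNsc ht0 ht2 hNF rfl
    rw [← hcomb]
    calc N (Matrix.diagonal fun i => ((Function.update y k (s * y k)) i : ℂ))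
        = nu N (Function.update y k (s * y k)) := rfl
    _ = nu N y := heq
    _ = N D := by rw [nu, hD]
  have hent : F k k = D k k := by rw [hFD]
  rw [hF, hD, Matrix.diagonal_apply_eq, Matrix.diagonal_apply_eq] at hent
  rw [if_pos rfl] at hent
  have h2 : (-y k : ℝ) = y k := by exact_mod_cast hent
  linarith

/-- a T-transform -/
lemma step_swap (hN : IsUINorm d N) (hNsc : IsStrictlyConvexNorm d N)
    (y : Fin d → ℝ) {j k : Fin d} (hjk : j ≠ k) {t : ℝ} (ht0 : 0 < t) (ht2 : t ≤ 1/2) :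
    nu N (Function.update (Function.update y j ((1-t) * y j + t * y k)) k
        (t * y j + (1-t) * y k)) ≤ nu N y ∧
      (nu N (Function.update (Function.update y j ((1-t) * y j + t * y k)) k
        (t * y j + (1-t) * y k)) = nu N y → y j = y k) := by
  set D : Matrix (Fin d) (Fin d) ℂ := Matrix.diagonal (fun i => (y i : ℂ)) with hD
  set C : Matrix (Fin d) (Fin d) ℂ :=
    Matrix.diagonal (fun i => ((y (Equiv.swap j k i) : ℝ) : ℂ)) with hC
  have hNC : N C = N D := nu_perm hN y (Equiv.swap j k)
  set y' := Function.update (Function.update y j ((1-t) * y j + t * y k)) k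
        (t * y j + (1-t) * y k) with hy'
  have hcomb : Matrix.diagonal (fun i => (y' i : ℂ)) = (t : ℂ) • C + ((1 - t : ℝ) : ℂ) • D := by
    ext i i'
    by_cases h : i = i'
    · subst h
      simp only [Matrix.add_apply, Matrix.smul_apply, hC, hD, Matrix.diagonal_apply_eq,
        smul_eq_mul]
      by_cases hk : i = k
      · subst hk
        rw [hy']
        simp only [Function.update_self, Equiv.swap_apply_right]
        push_cast; ring
      · by_cases hj : i = j
        · subst hj
          rw [hy']
          rw [Function.update_of_ne hk, Function.update_self, Equiv.swap_apply_left]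
          push_cast; ring
        · rw [hy', Function.update_of_ne hk, Function.update_of_ne hj,
            Equiv.swap_apply_of_ne_of_ne hj hk]
          push_cast; ring
    · simp [Matrix.diagonal_apply_ne _ h, hC, hD, h]
  have hle : nu N y' ≤ nu N y := by
    rw [nu, hcomb]
    calc N ((t : ℂ) • C + ((1 - t : ℝ) : ℂ) • D) ≤ t * N C + (1-t) * N D :=
        N_comb_le hN (le_of_lt ht0) (by linarith) C D
    _ = nu N y := by rw [hNC]; rw [nu, ← hD]; ring
  refine ⟨hle, fun heq => ?_⟩
  have hCD : C = D := by
    apply collapse hN hNsc ht0 ht2 hNC rfl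
    rw [← hcomb]
    calc N (Matrix.diagonal fun i => (y' i : ℂ))
        = nu N y' := rfl
    _ = nu N y := heq
    _ = N D := by rw [nu, hD]
  have hent : C j j = D j j := by rw [hCD]
  rw [hC, hD, Matrix.diagonal_apply_eq, Matrix.diagonal_apply_eq,
    Equiv.swap_apply_left] at hent
  exact_mod_cast hent.symm


/-- prefix sums -/
noncomputable def S (z : Fin d → ℝ) (m : ℕ) : ℝ :=
  ∑ i : Fin d, if (i : ℕ) < m then z i else 0

lemma S_d (z : Fin d → ℝ) : S z d = ∑ i, z i := by
  unfold S
  apply Finset.sum_congr rfl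
  intro i _
  simp [i.isLt]

lemma S_le_sum {z : Fin d → ℝ} (hz : ∀ i, 0 ≤ z i) (m : ℕ) : S z m ≤ ∑ i, z i := by
  unfold S
  apply Finset.sum_le_sum
  intro i _
  split
  · exact le_refl _
  · exact hz i

lemma S_succ (z : Fin d → ℝ) (m : ℕ) (hm : m < d) :
    S z (m + 1) = S z m + z ⟨m, hm⟩ := by
  unfold S
  have h : ∀ i : Fin d, (if (i : ℕ) < m + 1 then z i else 0)
      = (if (i : ℕ) < m then z i else 0) + (if i = ⟨m, hm⟩ then z i else 0) := by
    intro i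
    rcases lt_trichotomy (i : ℕ) m with h | h | h
    · rw [if_pos (Nat.lt_succ_of_lt h), if_pos h, if_neg (by
        intro he; rw [he] at h; simp at h)]
      ring
    · rw [if_pos (by omega), if_neg (by omega), if_pos (by exact Fin.ext h)]
      ring
    · rw [if_neg (by omega), if_neg (by omega), if_neg (by
        intro he; rw [he] at h; simp at h)]
      ring
  rw [Finset.sum_congr rfl (fun i _ => h i), Finset.sum_add_distrib]
  congr 1
  rw [Finset.sum_ite_eq' Finset.univ (⟨m, hm⟩ : Fin d) z]
  simp

lemma S_update (z : Fin d → ℝ) (a : Fin d) (b : ℝ) (m : ℕ) :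
    S (Function.update z a b) m = S z m + (if (a : ℕ) < m then b - z a else 0) := by
  unfold S
  have h : ∀ i : Fin d, (if (i : ℕ) < m then Function.update z a b i else 0)
      = (if (i : ℕ) < m then z i else 0)
        + (if i = a then (if (a : ℕ) < m then b - z a else 0) else 0) := by
    intro i
    by_cases hia : i = a
    · subst hia
      by_cases him : (i : ℕ) < m <;> simp [him]
    · rw [Function.update_of_ne hia, if_neg hia]
      ring
  rw [Finset.sum_congr rfl (fun i _ => h i), Finset.sum_add_distrib]
  congr 1
  rw [Finset.sum_ite_eq' Finset.univ a (fun _ => if (a : ℕ) < m then b - z a else 0)]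
  simp

lemma S_eq_sum_of_high_zero {z : Fin d → ℝ} {m : ℕ} (h : ∀ i : Fin d, m ≤ (i : ℕ) → z i = 0) :
    S z m = ∑ i, z i := by
  unfold S
  apply Finset.sum_congr rfl
  intro i _
  by_cases him : (i : ℕ) < m
  · rw [if_pos him]
  · rw [if_neg him, h i (by omega)]

lemma sum_update_ne (z : Fin d → ℝ) (a : Fin d) (b : ℝ) :
    ∑ i, Function.update z a b i = (∑ i, z i) + (b - z a) := by
  rw [Finset.sum_update_of_mem (Finset.mem_univ a)]
  rw [← Finset.sum_erase_add Finset.univ z (Finset.mem_univ a), Finset.sdiff_singleton_eq_erase]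
  ring


lemma core_eq (hN : IsUINorm d N) (hNsc : IsStrictlyConvexNorm d N) :
    ∀ (n : ℕ) (x y : Fin d → ℝ), Antitone x →
    (∀ m, S x m ≤ S y m) → (∑ i, x i) = (∑ i, y i) →
    ((Finset.univ.filter (fun i => x i ≠ y i)).card ≤ n) →
    nu N x ≤ nu N y ∧ (nu N x = nu N y → x = y) := by
  intro n
  induction n with
  | zero =>
    intro x y _ _ _ hcard
    have hxy : x = y := by
      funext i
      by_contra hne
      have : i ∈ Finset.univ.filter (fun i => x i ≠ y i) := by
        simp [hne]
      have := Finset.card_pos.mpr ⟨i, this⟩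
      omega
    subst hxy
    exact ⟨le_refl _, fun _ => rfl⟩
  | succ n ih =>
    intro x y hx hsub hsum hcard
    by_cases hxy : x = y
    · subst hxy; exact ⟨le_refl _, fun _ => rfl⟩
    -- the largest index where x < y
    have hJne : (Finset.univ.filter (fun i => x i < y i)).Nonempty := by
      by_contra hempty
      rw [Finset.not_nonempty_iff_eq_empty] at hempty
      have hyx : ∀ i, y i ≤ x i := by
        intro i
        by_contra hlt
        push_neg at hlt
        have : i ∈ Finset.univ.filter (fun i => x i < y i) := by simp [hlt]
        rw [hempty] at this
        simp at this
      have := (Finset.sum_eq_sum_iff_of_le (fun i _ => hyx i)).1 hsum.symm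
      exact hxy (funext fun i => ((this i (Finset.mem_univ i)).symm))
    set j := (Finset.univ.filter (fun i => x i < y i)).max' hJne with hjdef
    have hj : x j < y j := by
      have := (Finset.univ.filter (fun i => x i < y i)).max'_mem hJne
      rw [← hjdef] at this
      simpa using this
    have hjmax : ∀ i, j < i → ¬ (x i < y i) := by
      intro i hi hlt
      have : i ∈ Finset.univ.filter (fun i => x i < y i) := by simp [hlt]
      have := Finset.le_max' _ i this
      rw [← hjdef] at this
      exact absurd hi (not_lt.mpr this)
    -- the smallest index above j where y < x
    have hKne : (Finset.univ.filter (fun i => j < i ∧ y i < x i)).Nonempty := by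
      by_contra hempty
      rw [Finset.not_nonempty_iff_eq_empty] at hempty
      have heqhigh : ∀ i : Fin d, j < i → x i = y i := by
        intro i hi
        have h1 : ¬ (x i < y i) := hjmax i hi
        have h2 : ¬ (y i < x i) := by
          intro hlt
          have : i ∈ Finset.univ.filter (fun i => j < i ∧ y i < x i) := by simp [hi, hlt]
          rw [hempty] at this
          simp at this
        linarith [lt_or_ge (x i) (y i), lt_or_ge (y i) (x i)]
      -- S x (j+1) = S y (j+1) but also <
      have hslt : S x ((j:ℕ)+1) < S y ((j:ℕ)+1) := by
        rw [S_succ x j j.isLt, S_succ y j j.isLt]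
        have := hsub (j:ℕ)
        simp only [Fin.eta]
        linarith
      have hseq : S x ((j:ℕ)+1) = S y ((j:ℕ)+1) := by
        have hwz : ∀ i : Fin d, (j:ℕ)+1 ≤ (i:ℕ) → (fun i => y i - x i) i = 0 := by
          intro i hi
          have : j < i := by
            rw [Fin.lt_def]; omega
          simp [heqhigh i this]
        have h1 : S (fun i => y i - x i) ((j:ℕ)+1) = ∑ i, (y i - x i) :=
          S_eq_sum_of_high_zero hwz
        have h2 : ∑ i, (y i - x i) = 0 := by
          rw [Finset.sum_sub_distrib]
          linarith
        have h3 : S (fun i => y i - x i) ((j:ℕ)+1) = S y ((j:ℕ)+1) - S x ((j:ℕ)+1) := by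
          unfold S
          rw [← Finset.sum_sub_distrib]
          apply Finset.sum_congr rfl
          intro i _
          split <;> ring
        linarith
      linarith
    set k := (Finset.univ.filter (fun i => j < i ∧ y i < x i)).min' hKne with hkdef
    have hk : j < k ∧ y k < x k := by
      have := (Finset.univ.filter (fun i => j < i ∧ y i < x i)).min'_mem hKne
      rw [← hkdef] at this
      simpa using this
    have hkmin : ∀ i, j < i → i < k → ¬ (y i < x i) := by
      intro i hi hik hlt
      have : i ∈ Finset.univ.filter (fun i => j < i ∧ y i < x i) := by simp [hi, hlt]
      have := Finset.min'_le _ i this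
      rw [← hkdef] at this
      exact absurd hik (not_lt.mpr this)
    have hmid : ∀ i, j < i → i < k → x i = y i := by
      intro i hi hik
      have h1 := hjmax i hi
      have h2 := hkmin i hi hik
      linarith [lt_or_ge (x i) (y i), lt_or_ge (y i) (x i)]
    have hxkj : x k ≤ x j := hx (le_of_lt hk.1)
    have hyjk : y k < y j := by linarith [hj, hk.2]
    set δ := min (y j - x j) (x k - y k) with hδdef
    have hδ0 : 0 < δ := by
      apply lt_min <;> linarith [hj, hk.2]
    have hδ1 : δ ≤ y j - x j := min_le_left _ _
    have hδ2 : δ ≤ x k - y k := min_le_right _ _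
    set t := δ / (y j - y k) with htdef
    have hyjk0 : 0 < y j - y k := by linarith
    have ht0 : 0 < t := div_pos hδ0 hyjk0
    have ht2 : t ≤ 1/2 := by
      rw [htdef, div_le_iff₀ hyjk0]
      linarith
    have htδ : t * (y j - y k) = δ := by
      rw [htdef]
      field_simp
    set y' := Function.update (Function.update y j ((1-t) * y j + t * y k)) k
        (t * y j + (1-t) * y k) with hy'def
    have hjk : j ≠ k := ne_of_lt hk.1
    have hy'j : y' j = y j - δ := by
      rw [hy'def, Function.update_of_ne hjk, Function.update_self]
      linarith [htδ]
    have hy'k : y' k = y k + δ := by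
      rw [hy'def, Function.update_self]
      linarith [htδ]
    have hy'other : ∀ i, i ≠ j → i ≠ k → y' i = y i := by
      intro i hij hik
      rw [hy'def, Function.update_of_ne hik, Function.update_of_ne hij]
    have hy'alt : y' = Function.update (Function.update y j (y j - δ)) k (y k + δ) := by
      funext i
      by_cases hik : i = k
      · subst hik
        rw [hy'k, Function.update_self]
      · by_cases hij : i = j
        · subst hij
          rw [hy'j, Function.update_of_ne hik, Function.update_self]
        · rw [hy'other i hij hik, Function.update_of_ne hik, Function.update_of_ne hij]
    -- prefix sums of y'
    have hSy' : ∀ m, S y' m = S y m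
        + (if (j:ℕ) < m then -δ else 0) + (if (k:ℕ) < m then δ else 0) := by
      intro m
      rw [hy'alt, S_update, S_update]
      rw [Function.update_of_ne hjk.symm]
      split_ifs <;> ring
    -- submajorization by y'
    have hsub' : ∀ m, S x m ≤ S y' m := by
      have hkey : ∀ m, (j:ℕ)+1 ≤ m → (m ≤ (k:ℕ) → S x m ≤ S y m - δ) := by
        intro m hm
        induction m, hm using Nat.le_induction with
        | base =>
          intro _
          rw [S_succ x j j.isLt, S_succ y j j.isLt]
          have := hsub (j:ℕ)
          simp only [Fin.eta]
          linarith
        | succ m hm ihm =>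
          intro hmk
          have hkd : (k:ℕ) < d := k.isLt
          have hmd : m < d := by omega
          have hjm : j < (⟨m, hmd⟩ : Fin d) := by
            have h9 : (j:ℕ) < m := by omega
            simpa [Fin.lt_def] using h9
          have hmk' : (⟨m, hmd⟩ : Fin d) < k := by
            have h9 : m < (k:ℕ) := by omega
            simpa [Fin.lt_def] using h9
          have heq := hmid ⟨m, hmd⟩ hjm hmk'
          rw [S_succ x m hmd, S_succ y m hmd, heq]
          have := ihm (by omega)
          linarith
      intro m
      rw [hSy' m]
      rcases le_or_gt m (j:ℕ) with hmj | hmj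
      · rw [if_neg (by omega), if_neg (by
          have : (j:ℕ) < (k:ℕ) := hk.1
          omega)]
        have := hsub m
        linarith
      · rcases le_or_gt m (k:ℕ) with hmk | hmk
        · rw [if_pos hmj, if_neg (by omega)]
          have := hkey m (by omega) hmk
          linarith
        · rw [if_pos hmj, if_pos hmk]
          have := hsub m
          linarith
    -- sum equality
    have hsum' : (∑ i, x i) = ∑ i, y' i := by
      rw [hy'def]
      rw [sum_update_ne, sum_update_ne]
      rw [Function.update_of_ne hjk.symm]
      have : (1-t) * y j + t * y k - y j = -δ := by linarith [htδ]
      rw [this]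
      have : t * y j + (1-t) * y k - y k = δ := by linarith [htδ]
      rw [this]
      linarith [hsum]
    -- mismatch card decreases
    have hcard' : (Finset.univ.filter (fun i => x i ≠ y' i)).card ≤ n := by
      have hsubset : (Finset.univ.filter (fun i => x i ≠ y' i))
          ⊆ (Finset.univ.filter (fun i => x i ≠ y i)) := by
        intro i hi
        simp only [Finset.mem_filter, Finset.mem_univ, true_and] at hi ⊢
        by_cases hij : i = j
        · subst hij; linarith [hj]
        · by_cases hik : i = k
          · subst hik; linarith [hk.2]
          · rw [← hy'other i hij hik]; exact hi
      have hwit : ∃ w, w ∈ (Finset.univ.filter (fun i => x i ≠ y i))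
          ∧ w ∉ (Finset.univ.filter (fun i => x i ≠ y' i)) := by
        rcases le_or_gt (y j - x j) (x k - y k) with hc | hc
        · refine ⟨j, by simp; linarith [hj], ?_⟩
          simp only [Finset.mem_filter, Finset.mem_univ, true_and, not_not, Decidable.not_not]
          rw [hy'j]
          have : δ = y j - x j := min_eq_left hc
          linarith
        · refine ⟨k, by simp; linarith [hk.2], ?_⟩
          simp only [Finset.mem_filter, Finset.mem_univ, true_and, not_not, Decidable.not_not]
          rw [hy'k]
          have : δ = x k - y k := min_eq_right (le_of_lt hc)
          linarith
      obtain ⟨w, hw1, hw2⟩ := hwit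
      have := Finset.card_lt_card ((Finset.ssubset_iff_of_subset hsubset).2 ⟨w, hw1, hw2⟩)
      omega
    obtain ⟨hle1, heq1⟩ := ih x y' hx hsub' hsum' hcard'
    obtain ⟨hle2, heq2⟩ := step_swap hN hNsc y hjk ht0 ht2
    rw [← hy'def] at hle2 heq2
    refine ⟨le_trans hle1 hle2, fun heq => ?_⟩
    exfalso
    have h1 : nu N y' = nu N y := le_antisymm hle2 (by linarith)
    have := heq2 h1
    linarith [hyjk]


lemma core_w (hN : IsUINorm d N) (hNsc : IsStrictlyConvexNorm d N) :
    ∀ (n : ℕ) (x y : Fin d → ℝ), Antitone x → (∀ i, 0 ≤ x i) → (∀ i, 0 ≤ y i) →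
    (∀ m, S x m ≤ S y m) →
    ((Finset.univ.filter (fun i => y i ≠ 0)).card ≤ n) →
    nu N x ≤ nu N y ∧ (nu N x = nu N y → x = y) := by
  intro n
  induction n with
  | zero =>
    intro x y hx hx0 hy0 hsub hcard
    -- y = 0, so x = 0 as well
    have hy : ∀ i, y i = 0 := by
      intro i
      by_contra hne
      have : i ∈ Finset.univ.filter (fun i => y i ≠ 0) := by simp [hne]
      have := Finset.card_pos.mpr ⟨i, this⟩
      omega
    have hsumy : (∑ i, y i) = 0 := by simp [hy]
    have hsumx : (∑ i, x i) = 0 := by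
      have h1 := hsub d
      rw [S_d, S_d, hsumy] at h1
      have h2 : 0 ≤ ∑ i, x i := Finset.sum_nonneg fun i _ => hx0 i
      linarith
    have hx' : ∀ i, x i = 0 := by
      intro i
      have := (Finset.sum_eq_zero_iff_of_nonneg (fun i _ => hx0 i)).1 hsumx
      exact this i (Finset.mem_univ i)
    have : x = y := by funext i; rw [hx' i, hy i]
    subst this
    exact ⟨le_refl _, fun _ => rfl⟩
  | succ n ih =>
    intro x y hx hx0 hy0 hsub hcard
    by_cases hsum : (∑ i, x i) = ∑ i, y i
    · exact core_eq hN hNsc _ x y hx hsub hsum (le_refl _)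
    have hlt : (∑ i, x i) < ∑ i, y i := by
      have h1 := hsub d
      rw [S_d, S_d] at h1
      exact lt_of_le_of_ne h1 hsum
    have hKne : (Finset.univ.filter (fun i => y i ≠ 0)).Nonempty := by
      by_contra hempty
      rw [Finset.not_nonempty_iff_eq_empty] at hempty
      have hy : ∀ i, y i = 0 := by
        intro i
        by_contra hne
        have : i ∈ Finset.univ.filter (fun i => y i ≠ 0) := by simp [hne]
        rw [hempty] at this
        simp at this
      have : (∑ i, y i) = 0 := by simp [hy]
      have h2 : 0 ≤ ∑ i, x i := Finset.sum_nonneg fun i _ => hx0 i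
      linarith
    set k := (Finset.univ.filter (fun i => y i ≠ 0)).max' hKne with hkdef
    have hk : y k ≠ 0 := by
      have := (Finset.univ.filter (fun i => y i ≠ 0)).max'_mem hKne
      rw [← hkdef] at this
      simpa using this
    have hkpos : 0 < y k := lt_of_le_of_ne (hy0 k) (Ne.symm hk)
    have hkmax : ∀ i, k < i → y i = 0 := by
      intro i hi
      by_contra hne
      have : i ∈ Finset.univ.filter (fun i => y i ≠ 0) := by simp [hne]
      have := Finset.le_max' _ i this
      rw [← hkdef] at this
      exact absurd hi (not_lt.mpr this)
    set δ := min (y k) ((∑ i, y i) - ∑ i, x i) with hδdef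
    have hδ0 : 0 < δ := lt_min hkpos (by linarith)
    have hδ1 : δ ≤ y k := min_le_left _ _
    have hδ2 : δ ≤ (∑ i, y i) - ∑ i, x i := min_le_right _ _
    set s := (y k - δ) / y k with hsdef
    have hs0 : 0 ≤ s := div_nonneg (by linarith) (le_of_lt hkpos)
    have hs1 : s < 1 := by
      rw [hsdef, div_lt_one hkpos]
      linarith
    have hsyk : s * y k = y k - δ := by
      rw [hsdef]
      field_simp
    set y' := Function.update y k (s * y k) with hy'def
    have hy'alt : y' = Function.update y k (y k - δ) := by rw [hy'def, hsyk]
    -- prefix sums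
    have hsub' : ∀ m, S x m ≤ S y' m := by
      intro m
      rw [hy'alt, S_update]
      by_cases hkm : (k:ℕ) < m
      · rw [if_pos hkm]
        have h1 : S y m = ∑ i, y i := by
          apply S_eq_sum_of_high_zero
          intro i hi
          apply hkmax
          rw [Fin.lt_def]
          omega
        have h2 : S x m ≤ ∑ i, x i := S_le_sum hx0 m
        rw [h1]
        linarith
      · rw [if_neg hkm]
        simpa using hsub m
    have hy'0 : ∀ i, 0 ≤ y' i := by
      intro i
      rw [hy'alt]
      by_cases hik : i = k
      · subst hik
        rw [Function.update_self]
        linarith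
      · rw [Function.update_of_ne hik]
        exact hy0 i
    obtain ⟨hle2, heq2⟩ := step_flip hN hNsc y k hs0 hs1
    rw [← hy'def] at hle2 heq2
    rcases eq_or_lt_of_le hδ1 with hc | hc
    · -- δ = y k : one more zero coordinate
      have hy'k : y' k = 0 := by
        rw [hy'alt, Function.update_self]
        linarith
      have hcard' : (Finset.univ.filter (fun i => y' i ≠ 0)).card ≤ n := by
        have hsubset : (Finset.univ.filter (fun i => y' i ≠ 0))
            ⊆ (Finset.univ.filter (fun i => y i ≠ 0)).erase k := by
          intro i hi
          simp only [Finset.mem_filter, Finset.mem_univ, true_and, Finset.mem_erase] at hi ⊢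
          by_cases hik : i = k
          · subst hik
            rw [hy'k] at hi
            exact absurd rfl hi
          · rw [hy'alt, Function.update_of_ne hik] at hi
            exact ⟨hik, hi⟩
        have h1 := Finset.card_le_card hsubset
        have h2 : ((Finset.univ.filter (fun i => y i ≠ 0)).erase k).card
            = (Finset.univ.filter (fun i => y i ≠ 0)).card - 1 := by
          apply Finset.card_erase_of_mem
          simp [hk]
        omega
      obtain ⟨hle1, _⟩ := ih x y' hx hx0 hy'0 hsub' hcard'
      refine ⟨le_trans hle1 hle2, fun heq => ?_⟩
      exfalso
      have h1 : nu N y' = nu N y := le_antisymm hle2 (by linarith)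
      exact hk (heq2 h1)
    · -- δ = deficit : sums become equal
      have hδeq : δ = (∑ i, y i) - ∑ i, x i := by
        rcases min_cases (y k) ((∑ i, y i) - ∑ i, x i) with ⟨h1, h2⟩ | ⟨h1, h2⟩
        · rw [hδdef] at hc ⊢
          rw [h1] at hc ⊢
          linarith
        · rw [hδdef, h1]
      have hsum' : (∑ i, x i) = ∑ i, y' i := by
        rw [hy'alt, sum_update_ne]
        linarith
      obtain ⟨hle1, _⟩ := core_eq hN hNsc _ x y' hx hsub' hsum' (le_refl _)
      refine ⟨le_trans hle1 hle2, fun heq => ?_⟩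
      exfalso
      have h1 : nu N y' = nu N y := le_antisymm hle2 (by linarith)
      have := heq2 h1
      linarith


lemma gram_decomp (M : Matrix (Fin d) (Fin d) ℂ) (g : Fin d → ℝ) (hg : ∀ i, 0 ≤ g i)
    (h : Mᴴ * M = Matrix.diagonal (fun i => ((g i ^ 2 : ℝ) : ℂ))) :
    ∃ Q ∈ Matrix.unitaryGroup (Fin d) ℂ,
      M = Q * Matrix.diagonal (fun i => ((g i : ℝ) : ℂ)) := by
  classical
  set col : Fin d → EuclideanSpace ℂ (Fin d) := fun j => WithLp.toLp 2 (fun i => M i j) with hcol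
  have hinner : ∀ i j, inner (𝕜 := ℂ) (col i) (col j)
      = (if i = j then ((g i ^ 2 : ℝ) : ℂ) else 0) := by
    intro i j
    have h1 : inner (𝕜 := ℂ) (col i) (col j) = ∑ k, starRingEnd ℂ (M k i) * M k j := by
      rw [PiLp.inner_apply]
      apply Finset.sum_congr rfl
      intro k _
      rw [RCLike.inner_apply']
    have h2 : (Mᴴ * M) i j = ∑ k, starRingEnd ℂ (M k i) * M k j := by
      rw [Matrix.mul_apply]
      apply Finset.sum_congr rfl
      intro k _
      rw [Matrix.conjTranspose_apply]
      rfl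
    rw [h1, ← h2, h, Matrix.diagonal_apply]
  set v : Fin d → EuclideanSpace ℂ (Fin d) :=
    fun j => (((g j)⁻¹ : ℝ) : ℂ) • col j with hv
  have horth : Orthonormal ℂ (Set.restrict {i | g i ≠ 0} v) := by
    rw [orthonormal_iff_ite]
    rintro ⟨i, hi⟩ ⟨j, hj⟩
    simp only [Set.restrict_apply, Set.restrict, hv]
    rw [inner_smul_left, inner_smul_right, hinner]
    by_cases hij : i = j
    · subst hij
      rw [if_pos rfl, if_pos rfl]
      simp only [map_inv₀, Complex.conj_ofReal]
      rw [show ((g i ^ 2 : ℝ) : ℂ) = (g i : ℂ) * (g i : ℂ) from by push_cast; ring]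
      have hgi : (g i : ℂ) ≠ 0 := by
        simpa using hi
      push_cast
      field_simp
    · rw [if_neg hij, if_neg (by simp [Subtype.ext_iff, hij])]
      ring
  have hcard : Module.finrank ℂ (EuclideanSpace ℂ (Fin d)) = Fintype.card (Fin d) := by
    simp [finrank_euclideanSpace]
  obtain ⟨b, hb⟩ := horth.exists_orthonormalBasis_extension_of_card_eq hcard
  set Q : Matrix (Fin d) (Fin d) ℂ := Matrix.of (fun i j => b j i) with hQ
  have hQu : Q ∈ Matrix.unitaryGroup (Fin d) ℂ := by
    rw [Matrix.mem_unitaryGroup_iff']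
    ext i j
    rw [Matrix.mul_apply]
    have hbo := b.orthonormal
    rw [orthonormal_iff_ite] at hbo
    have h2 := hbo i j
    rw [PiLp.inner_apply] at h2
    calc ∑ k, (star Q) i k * Q k j = ∑ k, starRingEnd ℂ (b i k) * (b j k) := by
          apply Finset.sum_congr rfl
          intro k _
          rw [Matrix.star_apply, hQ]
          rfl
    _ = (1 : Matrix (Fin d) (Fin d) ℂ) i j := by
          rw [show ∑ k, starRingEnd ℂ (b i k) * (b j k) = inner (𝕜 := ℂ) (b i) (b j) from by
            rw [PiLp.inner_apply]; simp only [RCLike.inner_apply']]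
          rw [hbo i j, Matrix.one_apply]
  refine ⟨Q, hQu, ?_⟩
  ext i j
  rw [Matrix.mul_diagonal]
  by_cases hj : g j = 0
  · rw [hj]
    have hcolj : col j = 0 := by
      rw [← inner_self_eq_zero (𝕜 := ℂ)]
      rw [hinner, if_pos rfl, hj]
      push_cast
      ring
    have : M i j = 0 := by
      have := congrArg (fun v => v i) hcolj
      exact this
    rw [this]
    push_cast
    ring
  · have hbj : b j = v j := hb j hj
    have : Q i j = ((g j)⁻¹ : ℝ) * M i j := by
      rw [hQ]
      show b j i = _
      rw [hbj, hv]
      show (((g j)⁻¹ : ℝ) : ℂ) • col j i = _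
      rw [smul_eq_mul]
    rw [this]
    have hgj : (g j : ℂ) ≠ 0 := by simpa using hj
    push_cast
    field_simp


lemma sortDesc_antitone {n : ℕ} (z : Fin n → ℝ) : Antitone (sortDesc z) := by
  intro a b hab
  exact Tuple.monotone_sort z (Fin.rev_le_rev.mpr hab)

lemma sortDesc_eq_self {n : ℕ} {z : Fin n → ℝ} (hz : Antitone z) : sortDesc z = z := by
  have h1 : Monotone (z ∘ (Fin.revPerm : Equiv.Perm (Fin n))) := by
    intro a b hab
    exact hz (Fin.rev_le_rev.mpr hab)
  have h2 : Monotone (z ∘ Tuple.sort z) := Tuple.monotone_sort z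
  have h3 := Tuple.unique_monotone h2 h1
  funext i
  have h4 := congrFun h3 i.rev
  simp only [Function.comp_apply] at h4
  show z (Tuple.sort z i.rev) = z i
  rw [h4]
  show z i.rev.rev = z i
  rw [Fin.rev_rev]

lemma sortDesc_comp {n : ℕ} (z : Fin n → ℝ) :
    sortDesc z = z ∘ (Fin.revPerm.trans (Tuple.sort z)) := rfl

lemma N_eq_nu_sv (hN : IsUINorm d N) (A : Matrix (Fin d) (Fin d) ℂ) :
    N A = nu N (sv A) := by
  set hH := Matrix.isHermitian_conjTranspose_mul_self A with hHdef
  set g : Fin d → ℝ := fun i => Real.sqrt (hH.eigenvalues i) with hgdef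
  set W : Matrix (Fin d) (Fin d) ℂ := (hH.eigenvectorUnitary : Matrix (Fin d) (Fin d) ℂ)
    with hWdef
  have hWmem : W ∈ Matrix.unitaryGroup (Fin d) ℂ := hH.eigenvectorUnitary.2
  have hWs : star W * W = 1 := (Matrix.mem_unitaryGroup_iff').mp hWmem
  have hWs' : W * star W = 1 := (Matrix.mem_unitaryGroup_iff).mp hWmem
  have hspec := hH.spectral_theorem
  have hMM : (A * W)ᴴ * (A * W) = Matrix.diagonal (fun i => ((g i ^ 2 : ℝ) : ℂ)) := by
    rw [Matrix.conjTranspose_mul]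
    have h1 : Wᴴ * Aᴴ * (A * W) = Wᴴ * (Aᴴ * A) * W := by
      simp only [Matrix.mul_assoc]
    rw [h1, hspec, Unitary.conjStarAlgAut_apply]
    rw [← Matrix.star_eq_conjTranspose W]
    have h2 : star W * (W * Matrix.diagonal (RCLike.ofReal ∘ hH.eigenvalues) * star W) * W
        = (star W * W) * Matrix.diagonal (RCLike.ofReal ∘ hH.eigenvalues) * (star W * W) := by
      simp only [Matrix.mul_assoc]
    rw [h2, hWs, Matrix.one_mul, Matrix.mul_one]
    have hfun : (RCLike.ofReal ∘ hH.eigenvalues : Fin d → ℂ)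
        = fun i => ((g i ^ 2 : ℝ) : ℂ) := by
      funext i
      have h3 : g i ^ 2 = hH.eigenvalues i :=
        Real.sq_sqrt (Matrix.eigenvalues_conjTranspose_mul_self_nonneg A i)
      rw [Function.comp_apply, h3]
      rfl
    rw [hfun]
  obtain ⟨Q, hQu, hQ⟩ := gram_decomp (A * W) g (fun i => Real.sqrt_nonneg _) hMM
  have hA : A = Q * Matrix.diagonal (fun i => ((g i : ℝ) : ℂ)) * star W := by
    have h1 : A * W * star W = A := by rw [Matrix.mul_assoc, hWs', Matrix.mul_one]
    rw [← h1, hQ]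
  have hNg : N A = nu N g := by
    rw [hA]
    exact hN.unitary_invariant _ Q (star W) hQu (Unitary.star_mem hWmem)
  have hsv : sv A = g ∘ (Fin.revPerm.trans (Tuple.sort g)) := by
    rw [show sv A = sortDesc g from rfl]
    exact sortDesc_comp g
  rw [hNg, hsv, nu_perm hN g (Fin.revPerm.trans (Tuple.sort g))]

end Aux

/-- If `s(A) ≺_w s(B)` and `N(A) = N(B)` for a strictly convex unitarily invariant
norm `N`, then `s(A) = s(B)`. -/
theorem stmt_19 {d : ℕ} (N : Matrix (Fin d) (Fin d) ℂ → ℝ)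
    (hN : IsUINorm d N) (hNsc : IsStrictlyConvexNorm d N)
    (A B : Matrix (Fin d) (Fin d) ℂ)
    (hsub : Submaj (sv A) (sv B)) (hNAB : N A = N B) :
    sv A = sv B := by
  have hxa : Antitone (sv A) := sortDesc_antitone _
  have hya : Antitone (sv B) := sortDesc_antitone _
  have hx0 : ∀ i, 0 ≤ sv A i := fun i => Real.sqrt_nonneg _
  have hy0 : ∀ i, 0 ≤ sv B i := fun i => Real.sqrt_nonneg _
  have hsub' : ∀ m, S (sv A) m ≤ S (sv B) m := by
    intro m
    have h1 := hsub m
    rw [pSumDesc, pSumDesc, sortDesc_eq_self hxa, sortDesc_eq_self hya] at h1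
    exact h1
  have hnu : nu N (sv A) = nu N (sv B) := by
    rw [← N_eq_nu_sv hN A, ← N_eq_nu_sv hN B]
    exact hNAB
  obtain ⟨_, heq⟩ := core_w hN hNsc
    ((Finset.univ.filter (fun i => sv B i ≠ 0)).card) (sv A) (sv B)
    hxa hx0 hy0 hsub' (le_refl _)
  exact heq hnu

end LocalLidskii
end
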